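/- arXiv:1505.03006 — 4 statements merged into one kernel-verified Lean document; each statement's English description precedes it below -/
import Mathlib

section
/- Let T : ℝ₊^N → ℝ₊₊^N be a positive concave mapping whose lower bounding matrix M satisfies ρ(M) < 1, and let T_A(x) := (I − M)⁻¹·(T(x) − M·x) be its accelerated mapping. Let u ∈ ℝ₊^N and define two sequences x′_{n+1} := T(x′_n) and x″_{n+1} := T_A(x″_n) with x′_1 = x″_1 = u. If T(u) ≥ u componentwise, then x″_n ≥ x′_n componentwise for every n; analogously, if T(u) ≤ u componentwise, then x″_n ≤ x′_n componentwise for every n. -/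
open Matrix Filter Topology

noncomputable section

/-- `g` is a supergradient of `f` at `x`: the supergradient inequality holds for all
points `y` in the nonnegative orthant. -/
def IsSupergrad {N : ℕ} (f : (Fin N → ℝ) → ℝ) (x g : Fin N → ℝ) : Prop :=
  ∀ y : Fin N → ℝ, 0 ≤ y → f y ≤ f x + ∑ i, g i * (y i - x i)

/-- `M` is the lower bounding matrix of the positive concave mapping with components `f i`:
`M i k` is the infimum of the `k`-th components of all supergradients of `f i` at points of
the nonnegative orthant. -/
def IsLBM {N : ℕ} (f : Fin N → (Fin N → ℝ) → ℝ) (M : Matrix (Fin N) (Fin N) ℝ) : Prop :=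
  ∀ i k, M i k =
    sInf {t : ℝ | ∃ x : Fin N → ℝ, 0 ≤ x ∧ ∃ g : Fin N → ℝ, IsSupergrad (f i) x g ∧ g k = t}

/-- The spectral radius of a real matrix: the supremum of the moduli of its complex
eigenvalues. -/
def specRad {N : ℕ} (M : Matrix (Fin N) (Fin N) ℝ) : ENNReal :=
  spectralRadius ℂ (M.map (algebraMap ℝ ℂ))

open scoped ENNReal NNReal

section MatrixAux

attribute [local instance] Matrix.linftyOpNormedRing Matrix.linftyOpNormedAlgebra

variable {N : ℕ}

lemma aux_mul_nonneg_entries {A B : Matrix (Fin N) (Fin N) ℝ} (hA : ∀ i k, 0 ≤ A i k)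
    (hB : ∀ i k, 0 ≤ B i k) : ∀ i k, 0 ≤ (A * B) i k := by
  intro i k
  rw [Matrix.mul_apply]
  exact Finset.sum_nonneg fun j _ => mul_nonneg (hA i j) (hB j k)

lemma aux_pow_nonneg_entries {M : Matrix (Fin N) (Fin N) ℝ} (hM : ∀ i k, 0 ≤ M i k) (m : ℕ) :
    ∀ i k, 0 ≤ (M ^ m) i k := by
  induction m with
  | zero => intro i k; simp [Matrix.one_apply]; split <;> norm_num
  | succ m ih => rw [pow_succ]; exact aux_mul_nonneg_entries ih hM

lemma aux_norm_map_eq (A : Matrix (Fin N) (Fin N) ℝ) :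
    ‖A.map (algebraMap ℝ ℂ)‖₊ = ‖A‖₊ := by
  rw [Matrix.linfty_opNNNorm_def, Matrix.linfty_opNNNorm_def]
  congr 1; ext i; congr 1; ext j
  simp [Matrix.map_apply]

lemma aux_exists_pow_norm_lt (M : Matrix (Fin N) (Fin N) ℝ) (hrad : specRad M < 1) :
    ∃ n : ℕ, 1 ≤ n ∧ ‖M ^ n‖₊ < 1 := by
  have h := spectrum.pow_nnnorm_pow_one_div_tendsto_nhds_spectralRadius (M.map (algebraMap ℝ ℂ))
  have hev : ∀ᶠ n : ℕ in atTop, (‖(M.map (algebraMap ℝ ℂ)) ^ n‖₊ : ℝ≥0∞) ^ (1 / (n:ℝ)) < 1 :=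
    h.eventually_lt_const hrad
  obtain ⟨n, hn1, hn⟩ := (hev.and (eventually_ge_atTop 1)).exists
  refine ⟨n, hn, ?_⟩
  have hmap : (M.map (algebraMap ℝ ℂ)) ^ n = (M ^ n).map (algebraMap ℝ ℂ) := by
    have := map_pow ((algebraMap ℝ ℂ).mapMatrix) M n
    simpa [RingHom.mapMatrix_apply] using this.symm
  rw [hmap, aux_norm_map_eq] at hn1
  by_contra hle
  push_neg at hle
  have : (1:ℝ≥0∞) ≤ (‖M ^ n‖₊ : ℝ≥0∞) ^ (1 / (n:ℝ)) := by
    apply ENNReal.one_le_rpow (by exact_mod_cast hle) (by positivity)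
  exact absurd hn1 (not_lt.mpr this)

lemma aux_exists_nonneg_inverse (M : Matrix (Fin N) (Fin N) ℝ) (hM0 : ∀ i k, 0 ≤ M i k)
    (hrad : specRad M < 1) :
    ∃ A : Matrix (Fin N) (Fin N) ℝ, (∀ i k, 0 ≤ A i k) ∧
      A * (1 - M) = 1 ∧ (1 - M) * A = 1 ∧ (1 - M)⁻¹ = A := by
  obtain ⟨n, hn1, hnorm⟩ := aux_exists_pow_norm_lt M hrad
  set P := M ^ n with hP
  have hPn : ‖P‖ < 1 := hnorm
  have hsum : Summable (fun k : ℕ => P ^ k) := summable_geometric_of_norm_lt_one hPn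
  set S := ∑' k : ℕ, P ^ k with hS
  have hS1 : S * (1 - P) = 1 := geom_series_mul_neg P hPn
  have hSnn : ∀ i k, 0 ≤ S i k := by
    intro i k
    have htend : Tendsto (fun m => ∑ j ∈ Finset.range m, P ^ j) atTop (𝓝 S) :=
      hsum.hasSum.tendsto_sum_nat
    have hcont : Continuous fun A : Matrix (Fin N) (Fin N) ℝ => A i k :=
      (continuous_apply k).comp (continuous_apply i)
    have := (hcont.continuousAt.tendsto.comp htend)
    refine ge_of_tendsto this ?_
    filter_upwards with m
    simp only [Function.comp]
    rw [Matrix.sum_apply]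
    exact Finset.sum_nonneg fun j _ =>
      aux_pow_nonneg_entries (by rw [hP]; exact aux_pow_nonneg_entries hM0 n) j i k
  set C := ∑ j ∈ Finset.range n, M ^ j with hC
  have hCnn : ∀ i k, 0 ≤ C i k := by
    intro i k
    rw [hC, Matrix.sum_apply]
    exact Finset.sum_nonneg fun j _ => aux_pow_nonneg_entries hM0 j i k
  have hkey : C * (1 - M) = 1 - P := by
    have h2 : C * (M - 1) = P - 1 := geom_sum_mul M n
    calc C * (1 - M) = -(C * (M - 1)) := by rw [← mul_neg, neg_sub]
    _ = -(P - 1) := by rw [h2]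
    _ = 1 - P := neg_sub _ _
  have hA1 : (S * C) * (1 - M) = 1 := by
    rw [mul_assoc, hkey, hS1]
  refine ⟨S * C, ?_, hA1, mul_eq_one_comm.mp hA1, Matrix.inv_eq_left_inv hA1⟩
  exact aux_mul_nonneg_entries hSnn hCnn

end MatrixAux

section ConvexAux

variable {N : ℕ}

lemma aux_supergrad_nonneg {φ : (Fin N → ℝ) → ℝ}
    (hpos : ∀ x : Fin N → ℝ, 0 ≤ x → 0 < φ x)
    {x g : Fin N → ℝ} (hx : 0 ≤ x) (hg : IsSupergrad φ x g) (k : Fin N) : 0 ≤ g k := by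
  by_contra hneg
  push_neg at hneg
  have hφx : 0 < φ x := hpos x hx
  have hgk : 0 < -(g k) := by linarith
  set c : ℝ := (φ x + 1) / (-(g k)) with hc
  have hcpos : 0 < c := div_pos (by linarith) hgk
  set y : Fin N → ℝ := fun i => x i + if i = k then c else 0 with hy
  have hy0 : 0 ≤ y := by
    intro i
    rw [hy]
    dsimp only
    split <;> [linarith [hx i]; simpa using hx i]
  have hineq := hg y hy0
  have hsum : ∑ i, g i * (y i - x i) = g k * c := by
    rw [hy]
    simp only [add_sub_cancel_left, mul_ite, mul_zero]
    simp [Finset.sum_ite_eq']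
  rw [hsum] at hineq
  have hgc : g k * c = -(φ x + 1) := by
    rw [hc]
    field_simp
    rw [div_self hneg.ne]
  rw [hgc] at hineq
  have := hpos y hy0
  linarith

lemma aux_exists_supergrad {φ : (Fin N → ℝ) → ℝ}
    (hconc : ConcaveOn ℝ {x : Fin N → ℝ | 0 ≤ x} φ)
    (hpos : ∀ x : Fin N → ℝ, 0 ≤ x → 0 < φ x)
    (z : Fin N → ℝ) (hz : ∀ k, 0 < z k) :
    ∃ g : Fin N → ℝ, IsSupergrad φ z g := by
  classical
  set s : Set (Fin N → ℝ) := {x | 0 ≤ x} with hs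
  have hzs : z ∈ s := fun k => (hz k).le
  set m : ℝ := φ 0 / 2 with hm
  have hm0 : (0:Fin N → ℝ) ∈ s := by rw [hs]; exact Set.mem_setOf_eq ▸ le_refl (0:Fin N → ℝ)
  have hmle : ∀ w ∈ s, m ≤ φ w := by
    intro w hw
    have h2w : (2:ℝ) • w ∈ s := by
      intro k
      simpa using mul_nonneg (by norm_num : (0:ℝ) ≤ 2) (hw k)
    have hcomb := hconc.2 hm0 h2w (by norm_num : (0:ℝ) ≤ 1/2) (by norm_num : (0:ℝ) ≤ 1/2)
      (by norm_num)
    have heq : (1/2:ℝ) • (0:Fin N → ℝ) + (1/2:ℝ) • ((2:ℝ) • w) = w := by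
      rw [smul_zero, zero_add, smul_smul]; norm_num
    rw [heq] at hcomb
    simp only [smul_eq_mul] at hcomb
    have := hpos ((2:ℝ) • w) h2w
    rw [hm]
    linarith [hcomb]
  set C : Set ((Fin N → ℝ) × ℝ) := {p | p.1 ∈ s ∧ p.2 ≤ φ p.1} with hCdef
  have hCconv : Convex ℝ C := hconc.convex_hypograph
  set U : Set ((Fin N → ℝ) × ℝ) := {p | (∀ k, 0 < p.1 k) ∧ p.2 < m} with hU
  have hUopen : IsOpen U := by
    have h1 : IsOpen {p : (Fin N → ℝ) × ℝ | ∀ k, 0 < p.1 k} := by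
      have : {p : (Fin N → ℝ) × ℝ | ∀ k, 0 < p.1 k} =
          ⋂ k, {p : (Fin N → ℝ) × ℝ | 0 < p.1 k} := by
        ext p; simp
      rw [this]
      exact isOpen_iInter_of_finite fun k =>
        isOpen_lt continuous_const ((continuous_apply k).comp continuous_fst)
    exact h1.inter (isOpen_lt continuous_snd continuous_const)
  have hUC : U ⊆ C := by
    rintro p ⟨h1, h2⟩
    exact ⟨fun k => (h1 k).le, h2.le.trans (hmle _ fun k => (h1 k).le)⟩
  have hbU : ((z, m - 1) : (Fin N → ℝ) × ℝ) ∈ U := ⟨hz, by show m - 1 < m; linarith⟩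
  have hbint : ((z, m - 1) : (Fin N → ℝ) × ℝ) ∈ interior C :=
    interior_maximal hUC hUopen hbU
  have hx0 : ((z, φ z) : (Fin N → ℝ) × ℝ) ∉ interior C := by
    intro hmem
    rw [mem_interior_iff_mem_nhds, Metric.mem_nhds_iff] at hmem
    obtain ⟨ε, hε, hball⟩ := hmem
    have : ((z, φ z + ε/2) : (Fin N → ℝ) × ℝ) ∈ C := by
      apply hball
      rw [Metric.mem_ball, Prod.dist_eq]
      apply max_lt
      · simpa using hε
      · rw [Real.dist_eq, abs_of_nonneg (by linarith : (0:ℝ) ≤ φ z + ε/2 - φ z)]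
        linarith
    have h2 : φ z + ε/2 ≤ φ z := this.2
    linarith
  obtain ⟨ℓ, hℓ⟩ := geometric_hahn_banach_open_point hCconv.interior isOpen_interior hx0
  have hCle : ∀ a ∈ C, ℓ a ≤ ℓ (z, φ z) := by
    intro a ha
    have hval : ∀ t : ℝ, t ∈ Set.Ioc (0:ℝ) 1 →
        t * ℓ (z, m - 1) + (1 - t) * ℓ a < ℓ (z, φ z) := by
      intro t ht
      have hmem : t • ((z, m-1) : (Fin N → ℝ) × ℝ) + (1 - t) • a ∈ interior C :=
        hCconv.combo_interior_closure_mem_interior hbint (subset_closure ha) ht.1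
          (by linarith [ht.2]) (by ring)
      have h := hℓ _ hmem
      rw [map_add, _root_.map_smul, _root_.map_smul, smul_eq_mul, smul_eq_mul] at h
      exact h
    have htend : Tendsto (fun t : ℝ => t * ℓ (z, m - 1) + (1 - t) * ℓ a) (𝓝[>] 0)
        (𝓝 (ℓ a)) := by
      have hcont : Continuous fun t : ℝ => t * ℓ (z, m - 1) + (1 - t) * ℓ a := by fun_prop
      have h2 := (hcont.tendsto 0).mono_left (nhdsWithin_le_nhds : 𝓝[>] (0:ℝ) ≤ 𝓝 0)
      norm_num at h2
      exact h2
    refine le_of_tendsto htend ?_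
    filter_upwards [Ioc_mem_nhdsGT_of_mem (Set.left_mem_Ico.mpr one_pos)] with t ht
    exact (hval t ht).le
  set β : ℝ := ℓ (0, 1) with hβ
  have hdecomp : ∀ (w : Fin N → ℝ) (r : ℝ), ℓ (w, r) = ℓ (w, 0) + r * β := by
    intro w r
    have : ((w, r) : (Fin N → ℝ) × ℝ) = (w, 0) + r • (0, 1) := by
      simp
    rw [this, map_add, _root_.map_smul, smul_eq_mul, ← hβ]
  have hβ0 : 0 ≤ β := by
    have h1 : ℓ (z, φ z - 1) ≤ ℓ (z, φ z) := hCle _ ⟨hzs, by show φ z - 1 ≤ φ z; linarith⟩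
    rw [hdecomp z (φ z - 1), hdecomp z (φ z)] at h1
    nlinarith
  have hβpos : 0 < β := by
    rcases hβ0.lt_or_eq with h | h
    · exact h
    · exfalso
      have := hℓ _ hbint
      rw [hdecomp z (m-1), hdecomp z (φ z), ← h] at this
      simp at this
  have hlin : ∀ w : Fin N → ℝ, ℓ (w, (0:ℝ)) = ∑ k, w k * ℓ (Pi.single k 1, 0) := by
    intro w
    have hw : ((w, (0:ℝ)) : (Fin N → ℝ) × ℝ) =
        ∑ k, w k • ((Pi.single k (1:ℝ) : Fin N → ℝ), (0:ℝ)) := by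
      rw [Prod.ext_iff]
      constructor
      · simp only [Prod.fst_sum, Prod.smul_fst]
        funext j
        rw [Finset.sum_apply]
        simp [Pi.single_apply]
      · rw [Prod.snd_sum]; simp
    rw [hw, map_sum]
    simp only [_root_.map_smul, smul_eq_mul]
  refine ⟨fun k => -(ℓ (Pi.single k 1, 0)) / β, ?_⟩
  intro y hy
  have h1 : ℓ (y, φ y) ≤ ℓ (z, φ z) := hCle _ ⟨hy, le_refl _⟩
  rw [hdecomp y (φ y), hdecomp z (φ z), hlin y, hlin z] at h1
  have hsum : ∑ k, (-(ℓ (Pi.single k 1, 0)) / β) * (y k - z k) =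
      (∑ k, z k * ℓ (Pi.single k 1, 0) - ∑ k, y k * ℓ (Pi.single k 1, 0)) / β := by
    rw [← Finset.sum_sub_distrib]
    rw [Finset.sum_div]
    apply Finset.sum_congr rfl
    intro k _
    field_simp
    ring
  rw [hsum]
  have hQ : (φ y - φ z) ≤
      (∑ k, z k * ℓ (Pi.single k 1, 0) - ∑ k, y k * ℓ (Pi.single k 1, 0)) / β :=
    (le_div_iff₀ hβpos).mpr (by nlinarith [h1])
  linarith

lemma aux_key_ineq {φ : (Fin N → ℝ) → ℝ}
    (hconc : ConcaveOn ℝ {x : Fin N → ℝ | 0 ≤ x} φ)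
    (husc : UpperSemicontinuousOn φ {x : Fin N → ℝ | 0 ≤ x})
    (hpos : ∀ x : Fin N → ℝ, 0 ≤ x → 0 < φ x)
    (Mrow : Fin N → ℝ)
    (hrow : ∀ k, Mrow k = sInf {t : ℝ |
      ∃ x : Fin N → ℝ, 0 ≤ x ∧ ∃ g : Fin N → ℝ, IsSupergrad φ x g ∧ g k = t})
    {x y : Fin N → ℝ} (hy : 0 ≤ y) (hxy : y ≤ x) :
    φ y + ∑ k, Mrow k * (x k - y k) ≤ φ x := by
  have hx : 0 ≤ x := le_trans hy hxy
  have hMrow_nonneg : ∀ k, 0 ≤ Mrow k := by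
    intro k
    rw [hrow k]
    apply Real.sInf_nonneg
    rintro t ⟨w, hw, g, hg, rfl⟩
    exact aux_supergrad_nonneg hpos hw hg k
  have hMrow_le : ∀ (w g : Fin N → ℝ), 0 ≤ w → IsSupergrad φ w g → ∀ k, Mrow k ≤ g k := by
    intro w g hw hg k
    rw [hrow k]
    apply csInf_le
    · exact ⟨0, by rintro t ⟨w', hw', g', hg', rfl⟩; exact aux_supergrad_nonneg hpos hw' hg' k⟩
    · exact ⟨w, hw, g, hg, rfl⟩
  set K : ℝ := φ y + ∑ k, Mrow k * (x k - y k) with hK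
  have hKε : ∀ ε : ℝ, 0 < ε → K ≤ φ (fun k => x k + ε) := by
    intro ε hε
    set z : Fin N → ℝ := fun k => x k + ε with hz
    have hzk : ∀ k, z k = x k + ε := fun k => rfl
    have hzpos : ∀ k, 0 < z k := fun k => by
      have h0 := hx k; simp only [Pi.zero_apply] at h0; rw [hzk k]; linarith
    obtain ⟨g, hg⟩ := aux_exists_supergrad hconc hpos z hzpos
    have h1 := hg y hy
    have h2 : ∑ k, g k * (y k - z k) = -∑ k, g k * (z k - y k) := by
      rw [← Finset.sum_neg_distrib]
      exact Finset.sum_congr rfl fun k _ => by ring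
    rw [h2] at h1
    have h3 : φ y + ∑ k, g k * (z k - y k) ≤ φ z := by linarith
    have h4 : ∑ k, Mrow k * (x k - y k) ≤ ∑ k, g k * (z k - y k) := by
      apply Finset.sum_le_sum
      intro k _
      have hgk : Mrow k ≤ g k := hMrow_le z g (fun j => (hzpos j).le) hg k
      have hky : y k ≤ x k := hxy k
      have : x k - y k ≤ z k - y k := by rw [hzk k]; linarith
      nlinarith [hMrow_nonneg k, aux_supergrad_nonneg hpos (fun j => (hzpos j).le) hg k]
    rw [hK]
    linarith
  by_contra hgt
  push_neg at hgt
  set c : ℝ := (φ x + K) / 2 with hc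
  have hcx : φ x < c := by rw [hc]; linarith
  have hcK : c < K := by rw [hc]; linarith
  have hev := husc x hx c hcx
  have htend : Tendsto (fun n : ℕ => (fun k => x k + 1 / (n + 1 : ℝ)))
      atTop (𝓝[{w : Fin N → ℝ | 0 ≤ w}] x) := by
    apply tendsto_nhdsWithin_of_tendsto_nhds_of_eventually_within
    · have hbase : Tendsto (fun n : ℕ => 1 / (n + 1 : ℝ)) atTop (𝓝 0) :=
        tendsto_one_div_add_atTop_nhds_zero_nat
      have : Tendsto (fun n : ℕ => (fun k : Fin N => x k + 1 / (n + 1 : ℝ))) atTop (𝓝 x) := by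
        rw [tendsto_pi_nhds]
        intro k
        simpa using (tendsto_const_nhds.add hbase)
      exact this
    · filter_upwards with n k
      have h1 : (0:ℝ) < 1 / (n + 1 : ℝ) := by positivity
      have h0 := hx k
      simp only [Pi.zero_apply] at h0 ⊢
      linarith
  obtain ⟨n, hn⟩ := (htend.eventually hev).exists
  have hKn := hKε (1 / (n + 1 : ℝ)) (by positivity)
  linarith

end ConvexAux

/-- The accelerated iterates dominate (resp. are dominated by) the standard iterates when
started from a point u with T(u) ≥ u (resp. T(u) ≤ u). -/
theorem accelerated_iterates_dominate {N : ℕ} (f : Fin N → (Fin N → ℝ) → ℝ)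
    (hconc : ∀ i, ConcaveOn ℝ {x : Fin N → ℝ | 0 ≤ x} (f i))
    (husc : ∀ i, UpperSemicontinuousOn (f i) {x : Fin N → ℝ | 0 ≤ x})
    (hpos : ∀ i, ∀ x : Fin N → ℝ, 0 ≤ x → 0 < f i x)
    (M : Matrix (Fin N) (Fin N) ℝ) (hM : IsLBM f M)
    (hrad : specRad M < 1)
    (TA : (Fin N → ℝ) → (Fin N → ℝ))
    (hTA : ∀ x : Fin N → ℝ, TA x = (1 - M)⁻¹ *ᵥ ((fun i => f i x) - M *ᵥ x))
    (u : Fin N → ℝ) (hu : 0 ≤ u)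
    (xp : ℕ → Fin N → ℝ) (hp0 : xp 0 = u) (hprec : ∀ n, xp (n + 1) = fun i => f i (xp n))
    (xq : ℕ → Fin N → ℝ) (hq0 : xq 0 = u) (hqrec : ∀ n, xq (n + 1) = TA (xq n)) :
    ((u ≤ fun i => f i u) → ∀ n, xp n ≤ xq n) ∧
    (((fun i => f i u) ≤ u) → ∀ n, xq n ≤ xp n) := by
  classical
  set Tv : (Fin N → ℝ) → (Fin N → ℝ) := fun x i => f i x with hTv
  -- nonnegativity of the lower bounding matrix
  have hM0 : ∀ i k, 0 ≤ M i k := by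
    intro i k
    rw [hM i k]
    apply Real.sInf_nonneg
    rintro t ⟨w, hw, g, hg, rfl⟩
    exact aux_supergrad_nonneg (hpos i) hw hg k
  obtain ⟨A, hA0, hAl, hAr, hinv⟩ := aux_exists_nonneg_inverse M hM0 hrad
  -- vector facts
  have hmvA_nonneg : ∀ v : Fin N → ℝ, 0 ≤ v → 0 ≤ A *ᵥ v := by
    intro v hv i
    simp only [Matrix.mulVec, dotProduct, Pi.zero_apply]
    exact Finset.sum_nonneg fun j _ => mul_nonneg (hA0 i j) (hv j)
  have hmvA_mono : ∀ v w : Fin N → ℝ, v ≤ w → A *ᵥ v ≤ A *ᵥ w := by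
    intro v w hvw
    have := hmvA_nonneg (w - v) (by simpa using sub_nonneg.mpr hvw)
    rw [Matrix.mulVec_sub] at this
    intro i
    have := this i
    simp only [Pi.sub_apply, Pi.zero_apply] at this
    linarith
  have hmvM_nonneg : ∀ v : Fin N → ℝ, 0 ≤ v → 0 ≤ M *ᵥ v := by
    intro v hv i
    simp only [Matrix.mulVec, dotProduct, Pi.zero_apply]
    exact Finset.sum_nonneg fun j _ => mul_nonneg (hM0 i j) (hv j)
  have hAinvl : ∀ v : Fin N → ℝ, A *ᵥ ((1 - M) *ᵥ v) = v := by
    intro v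
    rw [Matrix.mulVec_mulVec, hAl, Matrix.one_mulVec]
  have hAinvr : ∀ v : Fin N → ℝ, (1 - M) *ᵥ (A *ᵥ v) = v := by
    intro v
    rw [Matrix.mulVec_mulVec, hAr, Matrix.one_mulVec]
  -- decompositions of the accelerated map
  have hE1 : ∀ w : Fin N → ℝ, A *ᵥ (Tv w - M *ᵥ w) = w + A *ᵥ (Tv w - w) := by
    intro w
    have hdec : Tv w - M *ᵥ w = (1 - M) *ᵥ w + (Tv w - w) := by
      rw [Matrix.sub_mulVec, Matrix.one_mulVec]
      funext i
      simp only [Pi.add_apply, Pi.sub_apply]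
      ring
    rw [hdec, Matrix.mulVec_add, hAinvl]
  have hE2 : ∀ w : Fin N → ℝ, A *ᵥ (Tv w - M *ᵥ w) = Tv w + A *ᵥ (M *ᵥ (Tv w - w)) := by
    intro w
    have hdec : Tv w - M *ᵥ w = (1 - M) *ᵥ (Tv w) + M *ᵥ (Tv w - w) := by
      rw [Matrix.sub_mulVec, Matrix.one_mulVec, Matrix.mulVec_sub]
      funext i
      simp only [Pi.add_apply, Pi.sub_apply]
      ring
    rw [hdec, Matrix.mulVec_add, hAinvl]
  -- the key concavity inequality, vector form
  have hkey : ∀ v w : Fin N → ℝ, 0 ≤ v → v ≤ w → Tv v + M *ᵥ (w - v) ≤ Tv w := by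
    intro v w hv hvw i
    have hki := aux_key_ineq (hconc i) (husc i) (hpos i) (M i) (fun k => hM i k) hv hvw
    simp only [Pi.add_apply]
    have hmv : (M *ᵥ (w - v)) i = ∑ k, M i k * (w k - v k) := by
      simp [Matrix.mulVec, dotProduct]
    rw [hmv]
    exact hki
  -- monotonicity of Tv
  have hmono : ∀ v w : Fin N → ℝ, 0 ≤ v → v ≤ w → Tv v ≤ Tv w := by
    intro v w hv hvw
    have h := hkey v w hv hvw
    have h2 : 0 ≤ M *ᵥ (w - v) := hmvM_nonneg _ (by simpa using sub_nonneg.mpr hvw)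
    intro i
    have := h i
    have := h2 i
    simp only [Pi.add_apply, Pi.zero_apply] at *
    linarith
  -- definition of the iterates of xq
  have hdef : ∀ n, xq (n + 1) = A *ᵥ (Tv (xq n) - M *ᵥ (xq n)) := by
    intro n
    rw [hqrec n, hTA, hinv]
  -- the (1-M)-identity for xq (n+1)
  have hid : ∀ n, Tv (xq n) + (M *ᵥ (xq (n+1)) - M *ᵥ (xq n)) = xq (n+1) := by
    intro n
    have h := hAinvr (Tv (xq n) - M *ᵥ (xq n))
    rw [← hdef n, Matrix.sub_mulVec, Matrix.one_mulVec] at h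
    funext i
    have hi := congrFun h i
    simp only [Pi.add_apply, Pi.sub_apply] at *
    linarith
  constructor
  · -- T(u) ≥ u
    intro hup
    have main : ∀ n, 0 ≤ xp n ∧ xp n ≤ xq n ∧ xq n ≤ Tv (xq n) := by
      intro n
      induction n with
      | zero => rw [hp0, hq0]; exact ⟨hu, le_refl u, hup⟩
      | succ n ih =>
        obtain ⟨hpn0, hpq, hqT⟩ := ih
        have hqn0 : 0 ≤ xq n := le_trans hpn0 hpq
        have hTq0 : 0 ≤ Tv (xq n) - xq n := by simpa using sub_nonneg.mpr hqT
        have h1 : xq n ≤ xq (n+1) := by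
          rw [hdef n, hE1 (xq n)]
          exact le_add_of_nonneg_right (hmvA_nonneg _ hTq0)
        have h2 : Tv (xq n) ≤ xq (n+1) := by
          rw [hdef n, hE2 (xq n)]
          exact le_add_of_nonneg_right (hmvA_nonneg _ (hmvM_nonneg _ hTq0))
        have hp1 : 0 ≤ xp (n+1) := by
          rw [hprec n]
          exact fun i => (hpos i _ hpn0).le
        have hpq1 : xp (n+1) ≤ xq (n+1) := by
          rw [hprec n]
          exact le_trans (hmono _ _ hpn0 hpq) h2
        have hqT1 : xq (n+1) ≤ Tv (xq (n+1)) := by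
          have hk := hkey (xq n) (xq (n+1)) hqn0 h1
          have hidn := hid n
          intro i
          have h3 := hk i
          have h4 := congrFun hidn i
          rw [Matrix.mulVec_sub] at h3
          simp only [Pi.add_apply, Pi.sub_apply] at *
          linarith
        exact ⟨hp1, hpq1, hqT1⟩
    exact fun n => (main n).2.1
  · -- T(u) ≤ u
    intro hdn
    have main : ∀ n, 0 ≤ xq n ∧ xq n ≤ xp n ∧ Tv (xq n) ≤ xq n ∧ 0 ≤ xp n := by
      intro n
      induction n with
      | zero => rw [hp0, hq0]; exact ⟨hu, le_refl u, hdn, hu⟩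
      | succ n ih =>
        obtain ⟨hqn0, hqp, hTq, hpn0⟩ := ih
        have hTq0 : Tv (xq n) - xq n ≤ 0 := by simpa using sub_nonpos.mpr hTq
        have h1 : xq (n+1) ≤ xq n := by
          rw [hdef n, hE1 (xq n)]
          have := hmvA_mono _ _ hTq0
          rw [Matrix.mulVec_zero] at this
          intro i
          have := this i
          simp only [Pi.add_apply, Pi.zero_apply] at *
          linarith
        have h2 : xq (n+1) ≤ Tv (xq n) := by
          rw [hdef n, hE2 (xq n)]
          have hM2 : M *ᵥ (Tv (xq n) - xq n) ≤ 0 := by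
            have := hmvM_nonneg (xq n - Tv (xq n)) (by simpa using sub_nonneg.mpr hTq)
            rw [Matrix.mulVec_sub] at this
            intro i
            have := this i
            rw [Matrix.mulVec_sub]
            simp only [Pi.sub_apply, Pi.zero_apply] at *
            linarith
          have := hmvA_mono _ _ hM2
          rw [Matrix.mulVec_zero] at this
          intro i
          have := this i
          simp only [Pi.add_apply, Pi.zero_apply] at *
          linarith
        have h0q : 0 ≤ xq (n+1) := by
          rw [hdef n]
          apply hmvA_nonneg
          have hk := hkey 0 (xq n) (le_refl 0) hqn0
          rw [sub_zero] at hk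
          intro i
          have h3 := hk i
          have h4 : 0 < f i 0 := hpos i 0 (le_refl 0)
          simp only [Pi.add_apply, Pi.sub_apply, Pi.zero_apply] at *
          have : Tv 0 i = f i 0 := rfl
          rw [this] at h3
          linarith
        have hqT1 : Tv (xq (n+1)) ≤ xq (n+1) := by
          have hk := hkey (xq (n+1)) (xq n) h0q h1
          have hidn := hid n
          intro i
          have h3 := hk i
          have h4 := congrFun hidn i
          rw [Matrix.mulVec_sub] at h3
          simp only [Pi.add_apply, Pi.sub_apply] at *
          linarith
        have hqp1 : xq (n+1) ≤ xp (n+1) := by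
          rw [hprec n]
          exact le_trans h2 (hmono _ _ hqn0 hqp)
        have hp1 : 0 ≤ xp (n+1) := by
          rw [hprec n]
          exact fun i => (hpos i _ hpn0).le
        exact ⟨h0q, hqp1, hqT1, hp1⟩
    exact fun n => (main n).2.1
end
end

section
/- Let T : ℝ₊^N → ℝ₊₊^N be a positive concave mapping with a fixed point x* (T(x*) = x*), whose lower bounding matrix M satisfies ρ(M) < 1, and let T_A(x) := (I − M)⁻¹·(T(x) − M·x) be its accelerated mapping. Let u ∈ ℝ₊^N with T(u) ≥ u or T(u) ≤ u componentwise, and define x′_{n+1} := T(x′_n) and x″_{n+1} := T_A(x″_n) with x′_1 = x″_1 = u. Then the accelerated sequence converges faster in the sense that ‖x″_n − x*‖_∞ ≤ ‖x′_n − x*‖_∞ for every n, where ‖·‖_∞ denotes the maximum-absolute-value norm on ℝ^N. -/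
open Matrix Filter Topology

noncomputable section

/-! ### Auxiliary lemmas -/

namespace AccelAux

variable {N : ℕ}

/-- Supergradients of positive functions on the orthant have nonnegative components. -/
lemma supergrad_comp_nonneg {f : (Fin N → ℝ) → ℝ} (hpos : ∀ y : Fin N → ℝ, 0 ≤ y → 0 < f y)
    {x g : Fin N → ℝ} (hx : 0 ≤ x) (hg : IsSupergrad f x g) (k : Fin N) : 0 ≤ g k := by
  by_contra hneg
  push_neg at hneg
  have hfx : 0 < f x := hpos x hx
  set t : ℝ := (f x + 1) / (-g k) with ht
  have htpos : 0 < t := div_pos (by linarith) (by linarith)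
  set y : Fin N → ℝ := fun i => x i + t * (if i = k then 1 else 0) with hy
  have hy0 : 0 ≤ y := by
    intro i
    have hxi : (0:ℝ) ≤ x i := hx i
    by_cases h : i = k
    · subst h
      have hyi : y i = x i + t := by simp [hy]
      have hge : (0:ℝ) ≤ x i + t := by linarith
      simpa [hyi] using hge
    · simpa [hy, h] using hxi
  have hsum : (∑ i, g i * (y i - x i)) = g k * t := by
    rw [Finset.sum_eq_single k]
    · simp [hy]
    · intro b _ hb; simp [hy, hb]
    · intro h; exact absurd (Finset.mem_univ k) h
  have h1 := hg y hy0
  rw [hsum] at h1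
  have h2 : g k * t = -(f x + 1) := by
    have hgk : g k ≠ 0 := ne_of_lt hneg
    rw [ht, div_neg, mul_neg, mul_comm (g k) ((f x + 1) / g k), div_mul_cancel₀ _ hgk]
  have := hpos y hy0
  rw [h2] at h1
  linarith

/-- Existence of supergradients at strictly positive points. -/
lemma exists_supergrad {f : (Fin N → ℝ) → ℝ}
    (hconc : ConcaveOn ℝ {x : Fin N → ℝ | 0 ≤ x} f)
    {x : Fin N → ℝ} (hx : ∀ i, 0 < x i) : ∃ g, IsSupergrad f x g := by
  classical
  set S : Set (Fin N → ℝ) := {y | 0 ≤ y} with hS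
  set U : Set (Fin N → ℝ) := {y | ∀ i, 0 < y i} with hU
  have hUopen : IsOpen U := by
    have : U = ⋂ i, (fun y : Fin N → ℝ => y i) ⁻¹' Set.Ioi 0 := by
      ext y; simp [hU, Set.mem_iInter]
    rw [this]
    exact isOpen_iInter_of_finite fun i => (continuous_apply i).isOpen_preimage _ isOpen_Ioi
  have hUS : U ⊆ S := fun y hy i => (hy i).le
  have hUconv : Convex ℝ U := by
    intro y hy z hz a b ha hb hab i
    rcases ha.lt_or_eq with ha' | ha'
    · have : 0 < a * y i := mul_pos ha' (hy i)
      have : 0 ≤ b * z i := mul_nonneg hb (hz i).le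
      simp only [Pi.add_apply, Pi.smul_apply, smul_eq_mul]
      nlinarith [mul_pos ha' (hy i)]
    · have hb1 : b = 1 := by linarith
      simp only [Pi.add_apply, Pi.smul_apply, smul_eq_mul, ← ha', hb1]
      simpa using hz i
  have hxU : x ∈ U := hx
  have hfc : ContinuousOn f U := (hconc.subset hUS hUconv).continuousOn hUopen
  set A : Set ((Fin N → ℝ) × ℝ) := {p | p.1 ∈ U ∧ p.2 < f p.1} with hA
  have hAopen : IsOpen A := by
    have h1 : ContinuousOn (fun p : (Fin N → ℝ) × ℝ => f p.1 - p.2) (U ×ˢ Set.univ) := by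
      apply ContinuousOn.sub
      · exact hfc.comp continuous_fst.continuousOn fun p hp => hp.1
      · exact continuous_snd.continuousOn
    have h2 : IsOpen ((U ×ˢ Set.univ) ∩ (fun p : (Fin N → ℝ) × ℝ => f p.1 - p.2) ⁻¹' Set.Ioi 0) :=
      h1.isOpen_inter_preimage (hUopen.prod isOpen_univ) isOpen_Ioi
    have : A = (U ×ˢ Set.univ) ∩ (fun p : (Fin N → ℝ) × ℝ => f p.1 - p.2) ⁻¹' Set.Ioi 0 := by
      ext p; simp [hA, sub_pos, and_comm]
    rwa [this]
  have hAconv : Convex ℝ A := by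
    rintro p ⟨hp1, hp2⟩ q ⟨hq1, hq2⟩ a b ha hb hab
    refine ⟨hUconv hp1 hq1 ha hb hab, ?_⟩
    have hcon := hconc.2 (hUS hp1) (hUS hq1) ha hb hab
    have hlt : a * p.2 + b * q.2 < a * f p.1 + b * f q.1 := by
      rcases ha.lt_or_eq with ha' | ha'
      · exact add_lt_add_of_lt_of_le (by nlinarith) (mul_le_mul_of_nonneg_left hq2.le hb)
      · have hb1 : b = 1 := by linarith
        simp [← ha', hb1, hq2]
    calc (a • p + b • q).2 = a * p.2 + b * q.2 := by simp [smul_eq_mul]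
      _ < a * f p.1 + b * f q.1 := hlt
      _ ≤ f (a • p.1 + b • q.1) := by simpa [smul_eq_mul] using hcon
      _ = f ((a • p + b • q).1) := by simp
  have hxA : (x, f x) ∉ A := fun h => lt_irrefl _ h.2
  obtain ⟨L, hL⟩ := geometric_hahn_banach_open_point hAconv hAopen hxA
  set c : ℝ := L (0, 1) with hc
  have hLsplit : ∀ (y : Fin N → ℝ) (t : ℝ), L (y, t) = L (y, 0) + t * c := by
    intro y t
    have h : (y, t) = (y, (0:ℝ)) + t • ((0 : Fin N → ℝ), (1:ℝ)) := by
      simp [Prod.ext_iff]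
    rw [h, map_add, L.map_smul, smul_eq_mul]
  have hcpos : 0 < c := by
    have h1 : ((x, f x - 1) : (Fin N → ℝ) × ℝ) ∈ A := ⟨hxU, by simp⟩
    have h2 := hL _ h1
    rw [hLsplit x (f x - 1), hLsplit x (f x)] at h2
    have h3 : (f x - 1) * c < f x * c := by linarith
    linarith [h3]
  have key_interior : ∀ y ∈ U, f y ≤ f x + (L (x, 0) - L (y, 0)) / c := by
    intro y hy
    apply le_of_forall_lt
    intro t ht
    have h2 := hL (y, t) ⟨hy, ht⟩
    rw [hLsplit y t, hLsplit x (f x)] at h2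
    have hcne : c ≠ 0 := ne_of_gt hcpos
    rw [show f x + (L (x, 0) - L (y, 0)) / c = (f x * c + (L (x, 0) - L (y, 0))) / c by
      field_simp, lt_div_iff₀ hcpos]
    linarith
  have key_all : ∀ y : Fin N → ℝ, 0 ≤ y → f y ≤ f x + (L (x, 0) - L (y, 0)) / c := by
    intro y hy
    set z : ℝ → Fin N → ℝ := fun s => (1 - s) • y + s • x with hz
    have hzU : ∀ s : ℝ, 0 < s → s ≤ 1 → z s ∈ U := by
      intro s hs hs1 i
      simp only [hz, Pi.add_apply, Pi.smul_apply, smul_eq_mul]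
      have h1 : 0 ≤ (1 - s) * y i := mul_nonneg (by linarith) (hy i)
      nlinarith [hx i]
    have hev : ∀ᶠ s in 𝓝[>] (0:ℝ), (1 - s) * f y + s * f x ≤ f x + (L (x, 0) - L (z s, 0)) / c := by
      filter_upwards [Ioo_mem_nhdsGT_of_mem (Set.mem_Ico.mpr ⟨le_refl (0:ℝ), zero_lt_one⟩)]
        with s hs
      obtain ⟨hs0, hs1⟩ := hs
      have hzu := hzU s hs0 hs1.le
      have h1 := key_interior _ hzu
      have h2 := hconc.2 (fun i => hy i) (fun i => (hx i).le) (by linarith : (0:ℝ) ≤ 1 - s)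
        hs0.le (by ring)
      simp only [smul_eq_mul] at h2
      calc (1 - s) * f y + s * f x ≤ f ((1 - s) • y + s • x) := h2
        _ ≤ f x + (L (x, 0) - L (z s, 0)) / c := h1
    have h1 : Tendsto (fun s : ℝ => (1 - s) * f y + s * f x) (𝓝[>] 0) (𝓝 (f y)) := by
      have : Continuous (fun s : ℝ => (1 - s) * f y + s * f x) :=
        ((continuous_const.sub continuous_id).mul continuous_const).add
          (continuous_id.mul continuous_const)
      have h := this.tendsto 0
      simp only [sub_zero, one_mul, zero_mul, add_zero] at h
      exact h.mono_left nhdsWithin_le_nhds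
    have h2 : Tendsto (fun s : ℝ => f x + (L (x, 0) - L (z s, 0)) / c) (𝓝[>] 0)
        (𝓝 (f x + (L (x, 0) - L (y, 0)) / c)) := by
      have hzc : Continuous z := by
        apply Continuous.add
        · exact (continuous_const.sub continuous_id).smul continuous_const
        · exact continuous_id.smul continuous_const
      have hLc : Continuous (fun s : ℝ => L (z s, 0)) :=
        L.continuous.comp (hzc.prodMk continuous_const)
      have : Tendsto (fun s : ℝ => f x + (L (x, 0) - L (z s, 0)) / c) (𝓝 0)
          (𝓝 (f x + (L (x, 0) - L (z 0, 0)) / c)) := by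
        exact (continuous_const.add ((continuous_const.sub hLc).div_const c)).tendsto 0
      have hz0 : z 0 = y := by simp [hz]
      rw [hz0] at this
      exact this.mono_left nhdsWithin_le_nhds
    exact le_of_tendsto_of_tendsto h1 h2 hev
  -- extract the linear functional on the first factor
  set phi : (Fin N → ℝ) →L[ℝ] ℝ := L.comp (ContinuousLinearMap.inl ℝ (Fin N → ℝ) ℝ) with hphi
  have hphiL : ∀ y : Fin N → ℝ, phi y = L (y, 0) := by
    intro y; simp [hphi]
  set g : Fin N → ℝ := fun i => -(phi (fun j => if i = j then 1 else 0)) / c with hg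
  refine ⟨g, ?_⟩
  intro y hy
  have h1 := key_all y hy
  have h2 : (L (x, 0) - L (y, 0)) / c = ∑ i, g i * (y i - x i) := by
    rw [← hphiL, ← hphiL]
    have hx' := LinearMap.pi_apply_eq_sum_univ (phi : (Fin N → ℝ) →ₗ[ℝ] ℝ) x
    have hy' := LinearMap.pi_apply_eq_sum_univ (phi : (Fin N → ℝ) →ₗ[ℝ] ℝ) y
    simp only [ContinuousLinearMap.coe_coe, smul_eq_mul] at hx' hy'
    rw [hx', hy', ← Finset.sum_sub_distrib, Finset.sum_div]
    refine Finset.sum_congr rfl fun i _ => ?_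
    rw [hg]
    have hcne : c ≠ 0 := ne_of_gt hcpos
    field_simp
    ring
  rw [h2] at h1
  exact h1

/-- The fundamental inequality: for `a ≤ b` in the orthant,
`f i b - f i a ≥ ∑ k, M i k * (b k - a k)`. -/
lemma key_ineq {f : Fin N → (Fin N → ℝ) → ℝ}
    (hconc : ∀ i, ConcaveOn ℝ {x : Fin N → ℝ | 0 ≤ x} (f i))
    (husc : ∀ i, UpperSemicontinuousOn (f i) {x : Fin N → ℝ | 0 ≤ x})
    (hpos : ∀ i, ∀ x : Fin N → ℝ, 0 ≤ x → 0 < f i x)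
    {M : Matrix (Fin N) (Fin N) ℝ} (hM : IsLBM f M)
    {a b : Fin N → ℝ} (ha : 0 ≤ a) (hab : a ≤ b) (i : Fin N) :
    f i a + ∑ k, M i k * (b k - a k) ≤ f i b := by
  have hMnn : ∀ k, 0 ≤ M i k := by
    intro k
    rw [hM i k]
    apply Real.sInf_nonneg
    rintro t ⟨x, hx, g, hg, rfl⟩
    exact supergrad_comp_nonneg (hpos i) hx hg k
  have hMle : ∀ (x g : Fin N → ℝ), 0 ≤ x → IsSupergrad (f i) x g → ∀ k, M i k ≤ g k := by
    intro x g hx hg k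
    rw [hM i k]
    apply csInf_le
    · exact ⟨0, by rintro t ⟨x', hx', g', hg', rfl⟩; exact supergrad_comp_nonneg (hpos i) hx' hg' k⟩
    · exact ⟨x, hx, g, hg, rfl⟩
  have hb0 : 0 ≤ b := le_trans ha hab
  have hstep : ∀ t : ℝ, 0 < t →
      f i a + ∑ k, M i k * (b k - a k) ≤ f i (b + t • fun _ => (1:ℝ)) := by
    intro t ht
    set bt : Fin N → ℝ := b + t • fun _ => (1:ℝ) with hbt
    have hbtval : ∀ j, bt j = b j + t := by intro j; simp [hbt]
    have hbtpos : ∀ j, 0 < bt j := by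
      intro j
      have h1 : (0:ℝ) ≤ b j := hb0 j
      rw [hbtval]; linarith
    obtain ⟨g, hg⟩ := exists_supergrad (hconc i) hbtpos
    have h1 := hg a ha
    have hsum : ∑ k, M i k * (b k - a k) ≤ ∑ k, g k * (bt k - a k) := by
      apply Finset.sum_le_sum
      intro k _
      have h2 : M i k ≤ g k := hMle bt g (fun j => (hbtpos j).le) hg k
      have h3 : a k ≤ b k := hab k
      have h4 : bt k = b k + t := hbtval k
      have h5 : 0 ≤ g k := le_trans (hMnn k) h2
      nlinarith
    have hneg : ∑ k, g k * (a k - bt k) = -∑ k, g k * (bt k - a k) := by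
      rw [← Finset.sum_neg_distrib]
      exact Finset.sum_congr rfl fun k _ => by ring
    rw [hneg] at h1
    linarith
  by_contra hlt
  push_neg at hlt
  have hevent := husc i b hb0 _ hlt
  have htend : Tendsto (fun t : ℝ => b + t • fun _ => (1:ℝ)) (𝓝[>] 0)
      (𝓝[{x : Fin N → ℝ | 0 ≤ x}] b) := by
    rw [tendsto_nhdsWithin_iff]
    constructor
    · have hc : Continuous (fun t : ℝ => b + t • fun _ => (1:ℝ)) :=
        continuous_const.add (continuous_id.smul continuous_const)
      have := (hc.tendsto 0).mono_left (nhdsWithin_le_nhds (s := Set.Ioi (0:ℝ)))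
      simpa using this
    · filter_upwards [self_mem_nhdsWithin] with t ht
      intro j
      have h1 : (0:ℝ) ≤ b j := hb0 j
      have h2 : (0:ℝ) < t := ht
      simp only [Pi.add_apply, Pi.smul_apply, smul_eq_mul, mul_one, Pi.zero_apply]
      linarith
  have hev2 := htend.eventually hevent
  obtain ⟨t, htlt, ht0⟩ := (hev2.and self_mem_nhdsWithin).exists
  have := hstep t ht0
  linarith

/-! ### Matrix facts -/

attribute [local instance] Matrix.frobeniusNormedRing Matrix.frobeniusNormedAlgebra

lemma entry_norm_le (A : Matrix (Fin N) (Fin N) ℂ) (i j : Fin N) : ‖A i j‖ ≤ ‖A‖ := by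
  rw [Matrix.frobenius_norm_def]
  have h1 : ‖A i j‖ ^ (2:ℝ) ≤ ∑ i', ∑ j', ‖A i' j'‖ ^ (2:ℝ) := by
    calc ‖A i j‖ ^ (2:ℝ) ≤ ∑ j', ‖A i j'‖ ^ (2:ℝ) :=
          Finset.single_le_sum (fun _ _ => Real.rpow_nonneg (norm_nonneg _) _)
            (Finset.mem_univ j)
      _ ≤ ∑ i', ∑ j', ‖A i' j'‖ ^ (2:ℝ) :=
          Finset.single_le_sum
            (fun _ _ => Finset.sum_nonneg fun _ _ => Real.rpow_nonneg (norm_nonneg _) _)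
            (Finset.mem_univ i)
  calc ‖A i j‖ = (‖A i j‖ ^ (2:ℝ)) ^ ((1:ℝ)/2) := by
        rw [← Real.rpow_mul (norm_nonneg _)]; norm_num
    _ ≤ (∑ i', ∑ j', ‖A i' j'‖ ^ (2:ℝ)) ^ ((1:ℝ)/2) :=
        Real.rpow_le_rpow (Real.rpow_nonneg (norm_nonneg _) _) h1 (by norm_num)

lemma pow_entry_tendsto (M : Matrix (Fin N) (Fin N) ℝ) (hrad : specRad M < 1) (i j : Fin N) :
    Tendsto (fun n => (M ^ n) i j) atTop (𝓝 0) := by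
  set A : Matrix (Fin N) (Fin N) ℂ := M.map (algebraMap ℝ ℂ) with hA
  have hmap : ∀ n : ℕ, A ^ n = (M ^ n).map (algebraMap ℝ ℂ) := by
    intro n
    simpa [RingHom.mapMatrix_apply, hA] using (map_pow (RingHom.mapMatrix (algebraMap ℝ ℂ)) M n).symm
  haveI : CompleteSpace (Matrix (Fin N) (Fin N) ℂ) := FiniteDimensional.complete ℂ _
  obtain ⟨r', hr1, hr2⟩ := exists_between hrad
  have hr'top : r' ≠ ⊤ := (hr2.trans ENNReal.one_lt_top).ne
  set r : NNReal := r'.toNNReal with hr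
  have hrr : (r : ENNReal) = r' := ENNReal.coe_toNNReal hr'top
  have hr_lt1 : (r : ℝ) < 1 := by
    have : (r : ENNReal) < 1 := hrr ▸ hr2
    exact_mod_cast this
  have hg := spectrum.pow_nnnorm_pow_one_div_tendsto_nhds_spectralRadius A
  have hrad' : spectralRadius ℂ A < (r : ENNReal) := by rw [hrr]; exact hr1
  have hev : ∀ᶠ n : ℕ in atTop, (‖A ^ n‖₊ : ENNReal) ^ (1/(n:ℝ)) < (r : ENNReal) :=
    hg.eventually_lt_const hrad'
  have hbound : ∀ᶠ n : ℕ in atTop, ‖A ^ n‖ ≤ (r : ℝ) ^ n := by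
    filter_upwards [hev, eventually_ge_atTop 1] with n hn hn1
    have hnpos : (0:ℝ) < (n:ℝ) := by exact_mod_cast hn1
    have h2 := ENNReal.rpow_lt_rpow hn hnpos
    rw [← ENNReal.rpow_mul, one_div, inv_mul_cancel₀ (ne_of_gt hnpos), ENNReal.rpow_one] at h2
    rw [ENNReal.rpow_natCast] at h2
    have h3 : ‖A ^ n‖₊ ≤ r ^ n := by
      have := h2.le
      rw [← ENNReal.coe_pow] at this
      exact_mod_cast this
    calc ‖A ^ n‖ = ((‖A ^ n‖₊ : ℝ)) := rfl
      _ ≤ ((r ^ n : NNReal) : ℝ) := by exact_mod_cast h3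
      _ = (r : ℝ) ^ n := by push_cast; ring
  have hent : ∀ᶠ n : ℕ in atTop, ‖(M ^ n) i j‖ ≤ (r : ℝ) ^ n := by
    filter_upwards [hbound] with n hn
    have h1 : ‖(A ^ n) i j‖ ≤ ‖A ^ n‖ := entry_norm_le _ i j
    have h2 : (A ^ n) i j = (((M ^ n) i j : ℝ) : ℂ) := by
      rw [hmap n]; simp [Matrix.map_apply]
    rw [h2, Complex.norm_real] at h1
    exact h1.trans hn
  exact squeeze_zero_norm' hent (tendsto_pow_atTop_nhds_zero_of_lt_one r.coe_nonneg hr_lt1)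

lemma one_sub_inv_props (M : Matrix (Fin N) (Fin N) ℝ) (hMnn : ∀ i j, 0 ≤ M i j)
    (hrad : specRad M < 1) :
    (1 - M) * (1 - M)⁻¹ = 1 ∧ (1 - M)⁻¹ * (1 - M) = 1 ∧ ∀ i j, 0 ≤ (1 - M)⁻¹ i j := by
  classical
  set A : Matrix (Fin N) (Fin N) ℂ := M.map (algebraMap ℝ ℂ) with hA
  have hunit : IsUnit (1 - A) := by
    have hmem : (1:ℂ) ∉ spectrum ℂ A := by
      intro hmem
      have hle : (‖(1:ℂ)‖₊ : ENNReal) ≤ spectralRadius ℂ A :=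
        le_iSup₂ (f := fun k (_ : k ∈ spectrum ℂ A) => (‖k‖₊ : ENNReal)) 1 hmem
      rw [show ‖(1:ℂ)‖₊ = 1 by simp] at hle
      exact absurd (lt_of_le_of_lt hle hrad) (lt_irrefl _)
    have h := spectrum.notMem_iff.mp hmem
    simpa using h
  have hdet : IsUnit (1 - M).det := by
    have h1 : (RingHom.mapMatrix (algebraMap ℝ ℂ)) (1 - M) = 1 - A := by
      rw [map_sub (RingHom.mapMatrix (algebraMap ℝ ℂ)) 1 M]
      congr 1
      exact _root_.map_one _
    have h2 : IsUnit ((RingHom.mapMatrix (algebraMap ℝ ℂ)) (1 - M)).det := by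
      rw [h1]; exact (Matrix.isUnit_iff_isUnit_det _).mp hunit
    rw [← RingHom.map_det] at h2
    have h3 : (algebraMap ℝ ℂ) (1 - M).det ≠ 0 := h2.ne_zero
    refine isUnit_iff_ne_zero.mpr fun h => h3 ?_
    rw [h, map_zero]
  refine ⟨Matrix.mul_nonsing_inv _ hdet, Matrix.nonsing_inv_mul _ hdet, ?_⟩
  set B := (1 - M)⁻¹ with hB
  have hBid : B = 1 + M * B := by
    have h2 : (1 - M) * B = 1 := Matrix.mul_nonsing_inv _ hdet
    rw [Matrix.sub_mul, Matrix.one_mul] at h2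
    rw [← h2]
    abel
  have hpart : ∀ n, B = (∑ k ∈ Finset.range n, M ^ k) + M ^ n * B := by
    intro n
    induction n with
    | zero => simp
    | succ n ih =>
      have hstep : M ^ n * B = M ^ n + M ^ (n+1) * B := by
        conv_lhs => rw [hBid]
        rw [mul_add, mul_one, ← mul_assoc, ← pow_succ]
      rw [Finset.sum_range_succ]
      calc B = (∑ k ∈ Finset.range n, M ^ k) + M ^ n * B := ih
        _ = (∑ k ∈ Finset.range n, M ^ k) + (M ^ n + M ^ (n+1) * B) := by rw [hstep]
        _ = (∑ k ∈ Finset.range n, M ^ k) + M ^ n + M ^ (n+1) * B := by rw [add_assoc]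
  intro i j
  have hpownn : ∀ n (i j : Fin N), 0 ≤ (M ^ n) i j := by
    intro n
    induction n with
    | zero =>
      intro i j
      by_cases h : i = j <;> simp [pow_zero, Matrix.one_apply, h]
    | succ n ih =>
      intro i j
      rw [pow_succ, Matrix.mul_apply]
      exact Finset.sum_nonneg fun l _ => mul_nonneg (ih i l) (hMnn l j)
  have h1 : Tendsto (fun n => (M ^ n * B) i j) atTop (𝓝 0) := by
    have hs := tendsto_finset_sum Finset.univ
      (fun l (_ : l ∈ Finset.univ) => (pow_entry_tendsto M hrad i l).mul_const (B l j))
    simpa [Matrix.mul_apply] using hs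
  have h2 : Tendsto (fun n => (∑ k ∈ Finset.range n, M ^ k) i j) atTop (𝓝 (B i j)) := by
    have heq : (fun n => (∑ k ∈ Finset.range n, M ^ k) i j)
        = fun n => B i j - (M ^ n * B) i j := by
      funext n
      have h := hpart n
      have h' : B i j = (∑ k ∈ Finset.range n, M ^ k) i j + (M ^ n * B) i j := by
        conv_lhs => rw [h]
        simp [Matrix.add_apply]
      linarith
    rw [heq]
    simpa using tendsto_const_nhds.sub h1
  refine ge_of_tendsto h2 ?_
  filter_upwards with n
  rw [Matrix.sum_apply]
  exact Finset.sum_nonneg fun k _ => hpownn k i j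

lemma mulVec_mono {A : Matrix (Fin N) (Fin N) ℝ} (hA : ∀ i j, 0 ≤ A i j)
    {v w : Fin N → ℝ} (h : v ≤ w) : A *ᵥ v ≤ A *ᵥ w := by
  intro i
  simp only [Matrix.mulVec, dotProduct]
  exact Finset.sum_le_sum fun j _ => mul_le_mul_of_nonneg_left (h j) (hA i j)

lemma pi_norm_mono {v w : Fin N → ℝ} (hv : 0 ≤ v) (hvw : v ≤ w) : ‖v‖ ≤ ‖w‖ := by
  apply (pi_norm_le_iff_of_nonneg (norm_nonneg w)).mpr
  intro i
  have h1 : (0:ℝ) ≤ v i := hv i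
  have h2 : v i ≤ w i := hvw i
  rw [Real.norm_eq_abs, abs_of_nonneg h1]
  calc v i ≤ w i := h2
    _ ≤ |w i| := le_abs_self _
    _ ≤ ‖w‖ := by rw [← Real.norm_eq_abs]; exact norm_le_pi_norm w i

lemma scal_lt {f : (Fin N → ℝ) → ℝ} (hconc : ConcaveOn ℝ {x : Fin N → ℝ | 0 ≤ x} f)
    (hpos : ∀ y : Fin N → ℝ, 0 ≤ y → 0 < f y) {lam : ℝ} (hlam : 1 < lam)
    {x : Fin N → ℝ} (hx : 0 ≤ x) : f (lam • x) < lam * f x := by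
  have hlam0 : 0 < lam := by linarith
  have hmem1 : lam • x ∈ {x : Fin N → ℝ | 0 ≤ x} := by
    intro i
    have : (0:ℝ) ≤ x i := hx i
    simp only [Pi.smul_apply, smul_eq_mul, Pi.zero_apply]
    nlinarith
  have hmem0 : (0 : Fin N → ℝ) ∈ {x : Fin N → ℝ | 0 ≤ x} := Set.mem_setOf.mpr (le_refl _)
  have ha : (0:ℝ) ≤ lam⁻¹ := by positivity
  have hinv : lam⁻¹ * lam = 1 := inv_mul_cancel₀ (ne_of_gt hlam0)
  have hinv_pos : 0 < lam⁻¹ := by positivity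
  have hb' : 0 < 1 - lam⁻¹ := by nlinarith
  have hcomb := hconc.2 hmem1 hmem0 ha hb'.le (by ring)
  have hxx : lam⁻¹ • (lam • x) + (1 - lam⁻¹) • (0 : Fin N → ℝ) = x := by
    rw [smul_smul, hinv, one_smul, smul_zero, add_zero]
  rw [hxx] at hcomb
  simp only [smul_eq_mul] at hcomb
  have hf0 : 0 < f 0 := hpos 0 (le_refl _)
  have h1 : lam⁻¹ * f (lam • x) < f x := by nlinarith [mul_pos hb' hf0]
  have h2 : lam * (lam⁻¹ * f (lam • x)) = f (lam • x) := by
    rw [← mul_assoc, mul_inv_cancel₀ (ne_of_gt hlam0), one_mul]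
  calc f (lam • x) = lam * (lam⁻¹ * f (lam • x)) := h2.symm
    _ < lam * f x := mul_lt_mul_of_pos_left h1 hlam0

end AccelAux

/-- For monotone starting points, the accelerated iterates converge faster to the fixed
point than the standard iterates, in the sup-norm sense. -/
theorem accelerated_iterates_faster {N : ℕ} (f : Fin N → (Fin N → ℝ) → ℝ)
    (hconc : ∀ i, ConcaveOn ℝ {x : Fin N → ℝ | 0 ≤ x} (f i))
    (husc : ∀ i, UpperSemicontinuousOn (f i) {x : Fin N → ℝ | 0 ≤ x})
    (hpos : ∀ i, ∀ x : Fin N → ℝ, 0 ≤ x → 0 < f i x)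
    (M : Matrix (Fin N) (Fin N) ℝ) (hM : IsLBM f M)
    (hrad : specRad M < 1)
    (xstar : Fin N → ℝ) (hxstar : 0 ≤ xstar) (hfix : (fun i => f i xstar) = xstar)
    (TA : (Fin N → ℝ) → (Fin N → ℝ))
    (hTA : ∀ x : Fin N → ℝ, TA x = (1 - M)⁻¹ *ᵥ ((fun i => f i x) - M *ᵥ x))
    (u : Fin N → ℝ) (hu : 0 ≤ u)
    (hmonostart : (u ≤ fun i => f i u) ∨ ((fun i => f i u) ≤ u))
    (xp : ℕ → Fin N → ℝ) (hp0 : xp 0 = u) (hprec : ∀ n, xp (n + 1) = fun i => f i (xp n))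
    (xq : ℕ → Fin N → ℝ) (hq0 : xq 0 = u) (hqrec : ∀ n, xq (n + 1) = TA (xq n)) :
    ∀ n, ‖xq n - xstar‖ ≤ ‖xp n - xstar‖ := by
  classical
  have hxstar_pos : ∀ i, 0 < xstar i := fun i => by
    have h := hpos i xstar hxstar
    rwa [congrFun hfix i] at h
  have hMnn : ∀ i k, 0 ≤ M i k := by
    intro i k
    rw [hM i k]
    apply Real.sInf_nonneg
    rintro t ⟨x, hx, g, hg, rfl⟩
    exact AccelAux.supergrad_comp_nonneg (hpos i) hx hg k
  have key : ∀ a b : Fin N → ℝ, 0 ≤ a → a ≤ b → ∀ i,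
      f i a + ∑ k, M i k * (b k - a k) ≤ f i b :=
    fun a b ha hab => AccelAux.key_ineq hconc husc hpos hM ha hab
  have keyvec : ∀ a b : Fin N → ℝ, 0 ≤ a → a ≤ b →
      (fun i => f i a) - M *ᵥ a ≤ (fun i => f i b) - M *ᵥ b := by
    intro a b ha hab i
    have h := key a b ha hab i
    have hsum : ∑ k, M i k * (b k - a k) = (∑ k, M i k * b k) - ∑ k, M i k * a k := by
      rw [← Finset.sum_sub_distrib]
      exact Finset.sum_congr rfl fun k _ => mul_sub _ _ _
    rw [hsum] at h
    simp only [Pi.sub_apply, Matrix.mulVec, dotProduct]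
    linarith
  have mono : ∀ a b : Fin N → ℝ, 0 ≤ a → a ≤ b →
      (fun i => f i a) ≤ (fun i => f i b) := by
    intro a b ha hab i
    have h := key a b ha hab i
    have hnn : 0 ≤ ∑ k, M i k * (b k - a k) :=
      Finset.sum_nonneg fun k _ => mul_nonneg (hMnn i k) (by have := hab k; linarith)
    show f i a ≤ f i b
    linarith
  obtain ⟨hB1, hB2, hBnn⟩ := AccelAux.one_sub_inv_props M hMnn hrad
  have hBmono : ∀ v w : Fin N → ℝ, v ≤ w → (1 - M)⁻¹ *ᵥ v ≤ (1 - M)⁻¹ *ᵥ w :=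
    fun v w h => AccelAux.mulVec_mono hBnn h
  have hMmono : ∀ v w : Fin N → ℝ, v ≤ w → M *ᵥ v ≤ M *ᵥ w :=
    fun v w h => AccelAux.mulVec_mono hMnn h
  have hid : ∀ v : Fin N → ℝ, (1 - M)⁻¹ *ᵥ (v - M *ᵥ v) = v := by
    intro v
    have h : v - M *ᵥ v = (1 - M) *ᵥ v := by
      rw [Matrix.sub_mulVec, Matrix.one_mulVec]
    rw [h, Matrix.mulVec_mulVec, hB2, Matrix.one_mulVec]
  have hid2 : ∀ v : Fin N → ℝ, (1 - M) *ᵥ ((1 - M)⁻¹ *ᵥ v) = v := by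
    intro v; rw [Matrix.mulVec_mulVec, hB1, Matrix.one_mulVec]
  have hfixv : (fun i => f i xstar) = xstar := hfix
  rcases Nat.eq_zero_or_pos N with hN | hN
  · intro n
    have heq : xq n - xstar = xp n - xstar := by
      funext i
      exact absurd i.isLt (by omega)
    rw [heq]
  haveI : Nonempty (Fin N) := ⟨⟨0, hN⟩⟩
  rcases hmonostart with hup | hdown
  · -- increasing case : u ≤ T u
    have hux : u ≤ xstar := by
      by_contra hcon
      set lam : ℝ := Finset.univ.sup' Finset.univ_nonempty (fun k => u k / xstar k) with hlam
      have hle : ∀ k, u k ≤ lam * xstar k := by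
        intro k
        have h1 : u k / xstar k ≤ lam := by
          rw [hlam]; exact Finset.le_sup' (fun k => u k / xstar k) (Finset.mem_univ k)
        rwa [div_le_iff₀ (hxstar_pos k)] at h1
      have hlam1 : 1 < lam := by
        by_contra h
        push_neg at h
        apply hcon
        intro k
        calc u k ≤ lam * xstar k := hle k
          _ ≤ 1 * xstar k := mul_le_mul_of_nonneg_right h (hxstar_pos k).le
          _ = xstar k := one_mul _
      obtain ⟨k0, -, hk0⟩ :=
        Finset.exists_mem_eq_sup' Finset.univ_nonempty (fun k => u k / xstar k)
      have h1 : lam * xstar k0 = u k0 := by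
        rw [hlam, hk0, div_mul_cancel₀ _ (ne_of_gt (hxstar_pos k0))]
      have h2 : u k0 ≤ f k0 u := hup k0
      have h3 : f k0 u ≤ f k0 (lam • xstar) := by
        have hle' : u ≤ lam • xstar := by
          intro k; simpa [smul_eq_mul] using hle k
        exact mono u (lam • xstar) hu hle' k0
      have h4 : f k0 (lam • xstar) < lam * f k0 xstar :=
        AccelAux.scal_lt (hconc k0) (hpos k0) hlam1 hxstar
      have h5 : f k0 xstar = xstar k0 := congrFun hfix k0
      rw [h5] at h4
      linarith only [h1, h2, h3, h4]
    have inv : ∀ n, 0 ≤ xp n ∧ xp n ≤ xq n ∧ xq n ≤ xstar ∧ xq n ≤ fun i => f i (xq n) := by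
      intro n
      induction n with
      | zero =>
        refine ⟨by rw [hp0]; exact hu, by rw [hp0, hq0], by rw [hq0]; exact hux, ?_⟩
        rw [hq0]; exact hup
      | succ n ih =>
        obtain ⟨hp_nn, hpq, hqx, hqF⟩ := ih
        have hq_nn : 0 ≤ xq n := le_trans hp_nn hpq
        have hTAq : xq (n+1) = (1 - M)⁻¹ *ᵥ ((fun i => f i (xq n)) - M *ᵥ xq n) := by
          rw [hqrec, hTA]
        have h1 : xq (n+1) ≤ xstar := by
          rw [hTAq]
          calc (1 - M)⁻¹ *ᵥ ((fun i => f i (xq n)) - M *ᵥ xq n)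
              ≤ (1 - M)⁻¹ *ᵥ ((fun i => f i xstar) - M *ᵥ xstar) :=
                hBmono _ _ (keyvec _ _ hq_nn hqx)
            _ = (1 - M)⁻¹ *ᵥ (xstar - M *ᵥ xstar) := by rw [hfixv]
            _ = xstar := hid xstar
        have h2 : (fun i => f i (xq n)) ≤ xq (n+1) := by
          rw [hTAq]
          calc (fun i => f i (xq n))
              = (1 - M)⁻¹ *ᵥ ((fun i => f i (xq n)) - M *ᵥ (fun i => f i (xq n))) :=
                (hid _).symm
            _ ≤ (1 - M)⁻¹ *ᵥ ((fun i => f i (xq n)) - M *ᵥ xq n) := by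
                apply hBmono
                intro i
                have hmv := hMmono _ _ hqF i
                simp only [Pi.sub_apply]
                linarith
        have h3 : xp (n+1) ≤ xq (n+1) := by
          have hstep : xp (n+1) ≤ fun i => f i (xq n) := by
            rw [hprec]; exact mono _ _ hp_nn hpq
          exact le_trans hstep h2
        have h4 : 0 ≤ xp (n+1) := by
          rw [hprec]; intro i; exact (hpos i _ hp_nn).le
        have h5 : xq (n+1) ≤ fun i => f i (xq (n+1)) := by
          have hxy : xq n ≤ xq (n+1) := le_trans hqF h2
          have hyid' : xq (n+1) - M *ᵥ xq (n+1) = (fun i => f i (xq n)) - M *ᵥ xq n := by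
            have h := hid2 ((fun i => f i (xq n)) - M *ᵥ xq n)
            rw [← hTAq] at h
            rw [← h, Matrix.sub_mulVec, Matrix.one_mulVec]
          have hkv := keyvec _ _ hq_nn hxy
          intro i
          have h6 := congrFun hyid' i
          have h7 := hkv i
          simp only [Pi.sub_apply] at h6 h7
          show xq (n+1) i ≤ f i (xq (n+1))
          linarith
        exact ⟨h4, h3, h1, h5⟩
    intro n
    obtain ⟨hp_nn, hpq, hqx, -⟩ := inv n
    have h1 : ‖xstar - xq n‖ ≤ ‖xstar - xp n‖ := by
      apply AccelAux.pi_norm_mono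
      · intro i
        simp only [Pi.sub_apply, Pi.zero_apply]
        linarith [hqx i]
      · intro i
        simp only [Pi.sub_apply]
        linarith [hpq i]
    rwa [norm_sub_rev xstar (xq n), norm_sub_rev xstar (xp n)] at h1
  · -- decreasing case : T u ≤ u
    have hu_pos : ∀ i, 0 < u i := fun i => lt_of_lt_of_le (hpos i u hu) (hdown i)
    have hxu : xstar ≤ u := by
      by_contra hcon
      set lam : ℝ := Finset.univ.sup' Finset.univ_nonempty (fun k => xstar k / u k) with hlam
      have hle : ∀ k, xstar k ≤ lam * u k := by
        intro k
        have h1 : xstar k / u k ≤ lam := by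
          rw [hlam]; exact Finset.le_sup' (fun k => xstar k / u k) (Finset.mem_univ k)
        rwa [div_le_iff₀ (hu_pos k)] at h1
      have hlam1 : 1 < lam := by
        by_contra h
        push_neg at h
        apply hcon
        intro k
        calc xstar k ≤ lam * u k := hle k
          _ ≤ 1 * u k := mul_le_mul_of_nonneg_right h (hu_pos k).le
          _ = u k := one_mul _
      obtain ⟨k0, -, hk0⟩ :=
        Finset.exists_mem_eq_sup' Finset.univ_nonempty (fun k => xstar k / u k)
      have h1 : lam * u k0 = xstar k0 := by
        rw [hlam, hk0, div_mul_cancel₀ _ (ne_of_gt (hu_pos k0))]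
      have h2 : xstar k0 = f k0 xstar := (congrFun hfix k0).symm
      have h3 : f k0 xstar ≤ f k0 (lam • u) := by
        have hle' : xstar ≤ lam • u := by
          intro k; simpa [smul_eq_mul] using hle k
        exact mono xstar (lam • u) hxstar hle' k0
      have h4 : f k0 (lam • u) < lam * f k0 u :=
        AccelAux.scal_lt (hconc k0) (hpos k0) hlam1 hu
      have h5 : f k0 u ≤ u k0 := hdown k0
      have h6 : lam * f k0 u ≤ lam * u k0 :=
        mul_le_mul_of_nonneg_left h5 (by linarith only [hlam1])
      linarith only [h1, h2, h3, h4, h6]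
    have inv : ∀ n, xstar ≤ xq n ∧ xq n ≤ xp n ∧ (fun i => f i (xq n)) ≤ xq n := by
      intro n
      induction n with
      | zero => exact ⟨by rw [hq0]; exact hxu, by rw [hp0, hq0], by rw [hq0]; exact hdown⟩
      | succ n ih =>
        obtain ⟨hxq, hqp, hFq⟩ := ih
        have hq_nn : 0 ≤ xq n := le_trans hxstar hxq
        have hTAq : xq (n+1) = (1 - M)⁻¹ *ᵥ ((fun i => f i (xq n)) - M *ᵥ xq n) := by
          rw [hqrec, hTA]
        have h1 : xstar ≤ xq (n+1) := by
          rw [hTAq]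
          calc xstar = (1 - M)⁻¹ *ᵥ (xstar - M *ᵥ xstar) := (hid xstar).symm
            _ = (1 - M)⁻¹ *ᵥ ((fun i => f i xstar) - M *ᵥ xstar) := by rw [hfixv]
            _ ≤ (1 - M)⁻¹ *ᵥ ((fun i => f i (xq n)) - M *ᵥ xq n) :=
                hBmono _ _ (keyvec _ _ hxstar hxq)
        have h2 : xq (n+1) ≤ fun i => f i (xq n) := by
          rw [hTAq]
          calc (1 - M)⁻¹ *ᵥ ((fun i => f i (xq n)) - M *ᵥ xq n)
              ≤ (1 - M)⁻¹ *ᵥ ((fun i => f i (xq n)) - M *ᵥ (fun i => f i (xq n))) := by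
                apply hBmono
                intro i
                have hmv := hMmono _ _ hFq i
                simp only [Pi.sub_apply]
                linarith
            _ = (fun i => f i (xq n)) := hid _
        have h3 : xq (n+1) ≤ xp (n+1) := by
          have hstep : (fun i => f i (xq n)) ≤ xp (n+1) := by
            rw [hprec]; exact mono _ _ hq_nn hqp
          exact le_trans h2 hstep
        have h5 : (fun i => f i (xq (n+1))) ≤ xq (n+1) := by
          have h1nn : 0 ≤ xq (n+1) := le_trans hxstar h1
          have hxy : xq (n+1) ≤ xq n := le_trans h2 hFq
          have hyid' : xq (n+1) - M *ᵥ xq (n+1) = (fun i => f i (xq n)) - M *ᵥ xq n := by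
            have h := hid2 ((fun i => f i (xq n)) - M *ᵥ xq n)
            rw [← hTAq] at h
            rw [← h, Matrix.sub_mulVec, Matrix.one_mulVec]
          have hkv := keyvec _ _ h1nn hxy
          intro i
          have h6 := congrFun hyid' i
          have h7 := hkv i
          simp only [Pi.sub_apply] at h6 h7
          show f i (xq (n+1)) ≤ xq (n+1) i
          linarith
        exact ⟨h1, h3, h5⟩
    intro n
    obtain ⟨hxq, hqp, -⟩ := inv n
    apply AccelAux.pi_norm_mono
    · intro i
      simp only [Pi.sub_apply, Pi.zero_apply]
      linarith [hxq i]
    · intro i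
      simp only [Pi.sub_apply]
      linarith [hqp i]
end
end

section
/- Let T : ℝ₊^N → ℝ₊₊^N be a positive concave mapping with a fixed point x* (T(x*) = x*), whose lower bounding matrix M satisfies ρ(M) < 1, and let T_A(x) := (I − M)⁻¹·(T(x) − M·x) be its accelerated mapping. Then the sequence of iterates (T_A^n(0))_{n∈ℕ} converges faster to x* than (T^n(0))_{n∈ℕ}: for every n ∈ ℕ, ‖T_A^n(0) − x*‖_∞ ≤ ‖T^n(0) − x*‖_∞. -/
open Matrix Filter Topology

noncomputable section

set_option maxHeartbeats 1000000

section Aux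
variable {N : ℕ}

lemma mono_of_concave_pos (f : (Fin N → ℝ) → ℝ)
    (hc : ConcaveOn ℝ {x : Fin N → ℝ | 0 ≤ x} f)
    (hp : ∀ x : Fin N → ℝ, 0 ≤ x → 0 < f x)
    {x y : Fin N → ℝ} (hx : 0 ≤ x) (hxy : x ≤ y) : f x ≤ f y := by
  have hy : 0 ≤ y := le_trans hx hxy
  refine le_of_forall_pos_le_add (fun ε hε => ?_)
  set t : ℝ := min 1 (ε / f x) with ht
  have hfx : 0 < f x := hp x hx
  have ht0 : 0 < t := lt_min one_pos (div_pos hε hfx)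
  have ht1 : t ≤ 1 := min_le_left _ _
  -- z := x + (1/t) • (y - x)
  set z : Fin N → ℝ := x + t⁻¹ • (y - x) with hz
  have hzmem : 0 ≤ z := by
    intro i
    have : 0 ≤ (y - x) i := by simpa using (hxy i)
    have := mul_nonneg (le_of_lt (inv_pos.2 ht0)) this
    simpa [hz, Pi.add_apply] using add_nonneg (hx i) this
  have hcomb : (1 - t) • x + t • z = y := by
    funext i
    simp only [hz, Pi.add_apply, Pi.smul_apply, Pi.sub_apply, smul_eq_mul]
    field_simp
    ring
  have := hc.2 hx hzmem (by linarith : (0:ℝ) ≤ 1 - t) (le_of_lt ht0) (by ring)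
  rw [hcomb] at this
  have hfz : 0 < f z := hp z hzmem
  have h1 : f x ≤ f y + t * f x := by
    have : (1 - t) * f x + t * f z ≤ f y := by simpa [smul_eq_mul] using this
    nlinarith
  have h2 : t * f x ≤ ε := by
    have : t ≤ ε / f x := min_le_right _ _
    calc t * f x ≤ (ε / f x) * f x := by nlinarith
    _ = ε := by field_simp
  linarith

lemma supergrad_nonneg {f : (Fin N → ℝ) → ℝ}
    (hp : ∀ x : Fin N → ℝ, 0 ≤ x → 0 < f x)
    {x g : Fin N → ℝ} (hx : 0 ≤ x) (hg : IsSupergrad f x g) (k : Fin N) : 0 ≤ g k := by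
  by_contra hneg
  push_neg at hneg
  set t : ℝ := (f x + 1) / (-(g k)) with ht
  have hgk : 0 < -(g k) := by linarith
  have ht0 : 0 < t := div_pos (by linarith [hp x hx]) hgk
  set y : Fin N → ℝ := fun i => x i + if i = k then t else 0 with hy
  have hy0 : 0 ≤ y := by
    intro i
    rcases eq_or_ne i k with rfl | h
    · have := hx i; simp only [hy, if_pos rfl]; exact add_nonneg this ht0.le
    · simpa [hy, h] using hx i
  have hineq := hg y hy0
  have hsum : ∑ i, g i * (y i - x i) = g k * t := by
    rw [Finset.sum_eq_single k]
    · simp [hy]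
    · intro b _ hb; simp [hy, hb]
    · simp
  rw [hsum] at hineq
  have hkey : g k * t = -(f x + 1) := by
    rw [ht, mul_div_assoc', div_eq_iff hgk.ne']; ring
  rw [hkey] at hineq
  have := hp y hy0
  linarith

lemma exists_supergrad (f : (Fin N → ℝ) → ℝ)
    (hc : ConcaveOn ℝ {x : Fin N → ℝ | 0 ≤ x} f)
    {z : Fin N → ℝ} (hz : ∀ i, 0 < z i) : ∃ g, IsSupergrad f z g := by
  classical
  set U : Set (Fin N → ℝ) := {x | ∀ i, 0 < x i} with hU
  have hUopen : IsOpen U := by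
    have : U = Set.univ.pi (fun _ : Fin N => Set.Ioi (0:ℝ)) := by
      ext x; simp [hU, Set.mem_pi]
    rw [this]; exact isOpen_set_pi Set.finite_univ (fun i _ => isOpen_Ioi)
  have hUsub : U ⊆ {x : Fin N → ℝ | 0 ≤ x} := fun x hx i => (hx i).le
  have hUconv : Convex ℝ U := by
    intro x hx y hy s t hs ht hst i
    rcases eq_or_lt_of_le hs with rfl | hs'
    · simpa [(by linarith : t = 1)] using hy i
    · have h1 : 0 < s * x i := mul_pos hs' (hx i)
      have h2 : 0 ≤ t * y i := mul_nonneg ht (hy i).le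
      simpa using by linarith
  have hcU : ConcaveOn ℝ U f := hc.subset hUsub hUconv
  have hcont : ContinuousOn f U := hcU.continuousOn hUopen
  set A : Set ((Fin N → ℝ) × ℝ) := {p | p.1 ∈ U ∧ p.2 < f p.1} with hA
  have hAopen : IsOpen A := by
    rw [isOpen_iff_mem_nhds]
    rintro ⟨x, t⟩ ⟨hxU, hxt⟩
    have hfx : ContinuousAt f x := hcont.continuousAt (hUopen.mem_nhds hxU)
    have hgc : ContinuousAt (fun p : (Fin N → ℝ) × ℝ => f p.1 - p.2) (x, t) :=
      (hfx.comp continuousAt_fst).sub continuousAt_snd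
    have h1 : {p : (Fin N → ℝ) × ℝ | 0 < f p.1 - p.2} ∈ 𝓝 (x, t) :=
      hgc (isOpen_Ioi.mem_nhds (by simpa using sub_pos.2 hxt))
    have h2 : (U ×ˢ (Set.univ : Set ℝ)) ∈ 𝓝 (x, t) :=
      (hUopen.prod isOpen_univ).mem_nhds (by simp [hxU])
    filter_upwards [h1, h2] with p hp1 hp2
    exact ⟨hp2.1, by linarith [hp1]⟩
  have hAconv : Convex ℝ A := by
    rintro ⟨x, s⟩ ⟨hxU, hxs⟩ ⟨y, t⟩ ⟨hyU, hyt⟩ a b ha hb hab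
    constructor
    · exact hUconv hxU hyU ha hb hab
    · have hcomb := hcU.2 hxU hyU ha hb hab
      have hle : a • s + b • t ≤ a • f x + b • f y := by
        rcases eq_or_lt_of_le ha with rfl | ha'
        · have : b = 1 := by linarith
          simp only [smul_eq_mul, this]; nlinarith
        · rcases eq_or_lt_of_le hb with rfl | hb'
          · have : a = 1 := by linarith
            simp only [smul_eq_mul, this]; nlinarith
          · simp only [smul_eq_mul]; nlinarith
      have hlt : a • s + b • t < a • f x + b • f y ∨
          a • s + b • t < f (a • x + b • y) := by
        rcases eq_or_lt_of_le ha with rfl | ha'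
        · have hb1 : b = 1 := by linarith
          right; refine lt_of_lt_of_le ?_ hcomb
          simp only [smul_eq_mul, hb1, zero_mul, one_mul, zero_smul, one_smul, zero_add]
          exact hyt
        · left
          have : a • s < a • f x := by simp only [smul_eq_mul]; nlinarith
          have h2 : b • t ≤ b • f y := by simp only [smul_eq_mul]; nlinarith
          linarith
      rcases hlt with h | h
      · exact lt_of_lt_of_le h hcomb
      · exact h
  have hzU : z ∈ U := hz
  have hzA : (z, f z) ∉ A := fun h => lt_irrefl _ h.2
  obtain ⟨φ, hφ⟩ := geometric_hahn_banach_open_point hAconv hAopen hzA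
  set b : ℝ := φ (0, 1) with hbdef
  set a : Fin N → ℝ := fun k => φ (Pi.single k 1, 0) with hadef
  have hdecomp : ∀ (y : Fin N → ℝ) (t : ℝ), φ (y, t) = (∑ k, y k * a k) + t * b := by
    intro y t
    have h1 : ((y, t) : (Fin N → ℝ) × ℝ)
        = (∑ k, y k • (((Pi.single k 1 : Fin N → ℝ), (0:ℝ)) : (Fin N → ℝ) × ℝ))
          + t • (((0 : Fin N → ℝ), (1:ℝ)) : (Fin N → ℝ) × ℝ) := by
      refine Prod.ext ?_ ?_
      · show y = (_ : (Fin N → ℝ) × ℝ).1 + _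
        rw [Prod.fst_sum, Prod.smul_fst]
        have : ∀ k : Fin N, (y k • (((Pi.single k 1 : Fin N → ℝ), (0:ℝ)) : (Fin N → ℝ) × ℝ)).1
            = Pi.single k (y k) := by
          intro k
          show y k • (Pi.single k 1 : Fin N → ℝ) = _
          rw [← Pi.single_smul, smul_eq_mul, mul_one]
        rw [Finset.sum_congr rfl (fun k _ => this k), Finset.univ_sum_single]
        simp
      · show t = (_ : (Fin N → ℝ) × ℝ).2 + _
        rw [Prod.snd_sum, Prod.smul_snd]
        have : ∀ k : Fin N, (y k • (((Pi.single k 1 : Fin N → ℝ), (0:ℝ)) : (Fin N → ℝ) × ℝ)).2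
            = 0 := by intro k; show y k • (0:ℝ) = 0; simp
        rw [Finset.sum_congr rfl (fun k _ => this k)]
        simp
    rw [h1, map_add, map_sum, _root_.map_smul]
    simp only [_root_.map_smul, smul_eq_mul]
    rfl
  have hbpos : 0 < b := by
    have hmem : ((z, f z - 1) : (Fin N → ℝ) × ℝ) ∈ A := ⟨hzU, by show f z - 1 < f z; linarith⟩
    have := hφ _ hmem
    rw [hdecomp z (f z - 1), hdecomp z (f z)] at this
    nlinarith
  refine ⟨fun k => -(a k) / b, ?_⟩
  have step1 : ∀ y ∈ U, f y ≤ f z + ∑ k, (-(a k) / b) * (y k - z k) := by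
    intro y hyU
    refine le_of_forall_lt (fun c hc' => ?_)
    have hmem : ((y, c) : (Fin N → ℝ) × ℝ) ∈ A := ⟨hyU, hc'⟩
    have hlt := hφ _ hmem
    rw [hdecomp y c, hdecomp z (f z)] at hlt
    have hsum : ∑ k, (-(a k) / b) * (y k - z k)
        = ((∑ k, z k * a k) - (∑ k, y k * a k)) / b := by
      rw [← Finset.sum_sub_distrib, Finset.sum_div]
      refine Finset.sum_congr rfl (fun k _ => ?_)
      field_simp; ring
    rw [hsum]
    have h2 : c - f z < ((∑ k, z k * a k) - (∑ k, y k * a k)) / b := by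
      rw [lt_div_iff₀ hbpos]; nlinarith
    linarith
  intro y hy0
  set w : Fin N → ℝ := fun i => (y i + z i) / 2 with hw
  have hwU : w ∈ U := fun i => by
    have h1 : (0:ℝ) ≤ y i := by simpa using hy0 i
    have h2 := hz i
    show 0 < (y i + z i) / 2
    linarith
  have hw1 := step1 w hwU
  have hcomb : (1/2 : ℝ) • y + (1/2 : ℝ) • z = w := by
    funext i; simp only [hw, Pi.add_apply, Pi.smul_apply, smul_eq_mul]; ring
  have hconcw := hc.2 (Set.mem_setOf.2 hy0) (hUsub hzU) (by norm_num : (0:ℝ) ≤ 1/2)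
    (by norm_num : (0:ℝ) ≤ 1/2) (by norm_num)
  rw [hcomb] at hconcw
  have hsumw : ∑ k, (-(a k) / b) * (w k - z k)
      = (∑ k, (-(a k) / b) * (y k - z k)) / 2 := by
    rw [Finset.sum_div]
    refine Finset.sum_congr rfl (fun k _ => ?_)
    simp only [hw]; ring
  rw [hsumw] at hw1
  have : (1/2 : ℝ) * f y + (1/2 : ℝ) * f z ≤ f w := by simpa [smul_eq_mul] using hconcw
  linarith

section
attribute [local instance] Matrix.linftyOpNormedRing Matrix.linftyOpNormedAlgebra

lemma entry_norm_le (B : Matrix (Fin N) (Fin N) ℂ) (i j : Fin N) : ‖B i j‖ ≤ ‖B‖ := by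
  rw [Matrix.linfty_opNorm_def]
  have h1 : ‖B i j‖₊ ≤ ∑ j', ‖B i j'‖₊ := Finset.single_le_sum (f := fun j' => ‖B i j'‖₊) (fun _ _ => zero_le) (Finset.mem_univ j)
  have h2 : (∑ j', ‖B i j'‖₊) ≤ Finset.univ.sup fun i => ∑ j', ‖B i j'‖₊ :=
    Finset.le_sup (f := fun i => ∑ j' : Fin N, ‖B i j'‖₊) (Finset.mem_univ i)
  exact_mod_cast le_trans h1 h2

lemma gelfand_bound (M : Matrix (Fin N) (Fin N) ℝ) (hrad : specRad M < 1) :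
    ∃ c : ℝ, 0 ≤ c ∧ c < 1 ∧ ∀ᶠ n : ℕ in atTop, ∀ i k, |(M ^ n) i k| ≤ c ^ n := by
  haveI : FiniteDimensional ℂ (Matrix (Fin N) (Fin N) ℂ) := Matrix.finiteDimensional
  haveI : CompleteSpace (Matrix (Fin N) (Fin N) ℂ) := FiniteDimensional.complete ℂ _
  set A : Matrix (Fin N) (Fin N) ℂ := M.map (algebraMap ℝ ℂ) with hA
  have htend := spectrum.pow_norm_pow_one_div_tendsto_nhds_spectralRadius A
  obtain ⟨r, hr1, hr2⟩ := exists_between hrad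
  have hrtop : r ≠ ⊤ := ne_top_of_lt hr2
  set c : ℝ := r.toReal with hc
  have hc1 : c < 1 := by
    rw [hc, ← ENNReal.toReal_one]
    exact ENNReal.toReal_strict_mono (by simp) hr2
  have hc0 : 0 ≤ c := ENNReal.toReal_nonneg
  have hApow : ∀ n : ℕ, A ^ n = (M ^ n).map (algebraMap ℝ ℂ) := by
    intro n
    rw [hA, ← RingHom.mapMatrix_apply, ← RingHom.mapMatrix_apply, map_pow]
  refine ⟨c, hc0, hc1, ?_⟩
  have hev1 : ∀ᶠ n : ℕ in atTop, ENNReal.ofReal (‖A ^ n‖ ^ (1 / (n:ℝ))) < r :=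
    htend.eventually_lt_const hr1
  filter_upwards [hev1, eventually_ge_atTop 1] with n hn hn1 i k
  have hnorm : ‖A ^ n‖ ^ (1 / (n:ℝ)) < c :=
    (ENNReal.ofReal_lt_iff_lt_toReal (Real.rpow_nonneg (norm_nonneg _) _) hrtop).1 hn
  have hAn : ‖A ^ n‖ < c ^ n := by
    have hn0 : n ≠ 0 := by omega
    have := pow_lt_pow_left₀ hnorm (Real.rpow_nonneg (norm_nonneg _) _) hn0
    rwa [one_div, Real.rpow_inv_natCast_pow (norm_nonneg _) hn0] at this
  have hentry : ‖(A ^ n) i k‖ ≤ ‖A ^ n‖ := entry_norm_le _ i k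
  have heq : (A ^ n) i k = ((M ^ n) i k : ℂ) := by rw [hApow n]; rfl
  rw [heq, Complex.norm_real, Real.norm_eq_abs] at hentry
  linarith

end

lemma pow_entry_nonneg (M : Matrix (Fin N) (Fin N) ℝ) (hMnn : ∀ i k, 0 ≤ M i k) :
    ∀ (n : ℕ) i k, 0 ≤ (M ^ n) i k := by
  intro n
  induction n with
  | zero => intro i k; by_cases h : i = k <;> simp [pow_zero, Matrix.one_apply, h]
  | succ n ih =>
    intro i k
    rw [pow_succ, Matrix.mul_apply]
    exact Finset.sum_nonneg fun l _ => mul_nonneg (ih i l) (hMnn l k)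

lemma neumann (M : Matrix (Fin N) (Fin N) ℝ) (hMnn : ∀ i k, 0 ≤ M i k)
    (hrad : specRad M < 1) :
    ∃ S : Matrix (Fin N) (Fin N) ℝ, (1 - M) * S = 1 ∧ S * (1 - M) = 1 ∧ ∀ i k, 0 ≤ S i k := by
  obtain ⟨c, hc0, hc1, hev⟩ := gelfand_bound M hrad
  have hsum : ∀ i k, Summable fun n => (M ^ n) i k := by
    intro i k
    refine Summable.of_norm_bounded_eventually_nat
      (summable_geometric_of_lt_one hc0 hc1) ?_
    filter_upwards [hev] with n hn
    simpa [Real.norm_eq_abs] using hn i k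
  set S : Matrix (Fin N) (Fin N) ℝ := Matrix.of fun i j => ∑' n, (M ^ n) i j with hS
  have hSapp : ∀ i j, S i j = ∑' n, (M ^ n) i j := fun i j => by rw [hS, Matrix.of_apply]
  have htel : ∀ i j, HasSum (fun n => (M ^ n) i j - (M ^ (n+1)) i j) ((1 : Matrix (Fin N) (Fin N) ℝ) i j) := by
    intro i j
    have hs2 : Summable fun n => (M ^ (n+1)) i j := (summable_nat_add_iff (f := fun n => (M ^ n) i j) 1).2 (hsum i j)
    have hs : Summable fun n => (M ^ n) i j - (M ^ (n+1)) i j := (hsum i j).sub hs2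
    rw [hs.hasSum_iff_tendsto_nat]
    have heq : ∀ n : ℕ, ∑ m ∈ Finset.range n, ((M ^ m) i j - (M ^ (m+1)) i j)
        = (M ^ 0) i j - (M ^ n) i j := fun n => Finset.sum_range_sub' (fun m => (M ^ m) i j) n
    simp only [heq]
    have h0 : Tendsto (fun n => (M ^ n) i j) atTop (𝓝 0) := (hsum i j).tendsto_atTop_zero
    have := (tendsto_const_nhds (x := (M ^ 0) i j)).sub h0
    rw [sub_zero] at this
    simpa [pow_zero] using this
  refine ⟨S, ?_, ?_, ?_⟩
  · ext i j
    rw [Matrix.mul_apply]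
    have h1 : ∀ k, (1 - M) i k * S k j = ∑' n, (1 - M) i k * (M ^ n) k j := by
      intro k; rw [hSapp, tsum_mul_left]
    rw [Finset.sum_congr rfl (fun k _ => h1 k),
      ← Summable.tsum_finsetSum (fun k _ => ((hsum k j).mul_left _))]
    have h2 : ∀ n : ℕ, ∑ k, (1 - M) i k * (M ^ n) k j = (M ^ n) i j - (M ^ (n+1)) i j := by
      intro n
      have : ∑ k, (1 - M) i k * (M ^ n) k j = ((1 - M) * M ^ n) i j := (Matrix.mul_apply).symm
      rw [this, Matrix.sub_mul, Matrix.one_mul, ← pow_succ']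
      rfl
    rw [tsum_congr h2, (htel i j).tsum_eq]
  · ext i j
    rw [Matrix.mul_apply]
    have h1 : ∀ k, S i k * (1 - M) k j = ∑' n, (M ^ n) i k * (1 - M) k j := by
      intro k; rw [hSapp, tsum_mul_right]
    rw [Finset.sum_congr rfl (fun k _ => h1 k),
      ← Summable.tsum_finsetSum (fun k _ => ((hsum i k).mul_right _))]
    have h2 : ∀ n : ℕ, ∑ k, (M ^ n) i k * (1 - M) k j = (M ^ n) i j - (M ^ (n+1)) i j := by
      intro n
      have : ∑ k, (M ^ n) i k * (1 - M) k j = (M ^ n * (1 - M)) i j := (Matrix.mul_apply).symm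
      rw [this, Matrix.mul_sub, Matrix.mul_one, ← pow_succ]
      rfl
    rw [tsum_congr h2, (htel i j).tsum_eq]
  · intro i k
    rw [hSapp]
    exact tsum_nonneg fun n => pow_entry_nonneg M hMnn n i k

lemma lbm_nonneg (f : Fin N → (Fin N → ℝ) → ℝ)
    (hpos : ∀ i, ∀ x : Fin N → ℝ, 0 ≤ x → 0 < f i x)
    {M : Matrix (Fin N) (Fin N) ℝ} (hM : IsLBM f M) (i k : Fin N) : 0 ≤ M i k := by
  rw [hM i k]
  apply Real.sInf_nonneg
  rintro t ⟨x, hx, g, hg, rfl⟩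
  exact supergrad_nonneg (hpos i) hx hg k

lemma lbm_le (f : Fin N → (Fin N → ℝ) → ℝ)
    (hpos : ∀ i, ∀ x : Fin N → ℝ, 0 ≤ x → 0 < f i x)
    {M : Matrix (Fin N) (Fin N) ℝ} (hM : IsLBM f M) (i : Fin N)
    {x g : Fin N → ℝ} (hx : 0 ≤ x) (hg : IsSupergrad (f i) x g) (k : Fin N) :
    M i k ≤ g k := by
  rw [hM i k]
  refine csInf_le ⟨0, ?_⟩ ⟨x, hx, g, hg, rfl⟩
  rintro t ⟨x', hx', g', hg', rfl⟩
  exact supergrad_nonneg (hpos i) hx' hg' k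

lemma key_ineq (f : Fin N → (Fin N → ℝ) → ℝ)
    (hconc : ∀ i, ConcaveOn ℝ {x : Fin N → ℝ | 0 ≤ x} (f i))
    (hpos : ∀ i, ∀ x : Fin N → ℝ, 0 ≤ x → 0 < f i x)
    {M : Matrix (Fin N) (Fin N) ℝ} (hM : IsLBM f M)
    {x y : Fin N → ℝ} (hx : 0 ≤ x) (hxy : x ≤ y) (hy : ∀ k, 0 < y k) (i : Fin N) :
    f i x + ∑ k, M i k * (y k - x k) ≤ f i y := by
  set z : Fin N → ℝ := fun k => 2 * y k - x k with hzdef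
  have hxk : ∀ k, x k ≤ y k := fun k => hxy k
  have hz : ∀ k, 0 < z k := fun k => by
    have := hxk k; have := hy k; simp only [hzdef]; linarith
  have hz0 : 0 ≤ z := fun k => (hz k).le
  obtain ⟨g, hg⟩ := exists_supergrad (f i) (hconc i) hz
  have hgM : ∀ k, M i k ≤ g k := lbm_le f hpos hM i hz0 hg
  have hsg := hg x hx
  have hsum1 : ∑ k, g k * (x k - z k) = -2 * ∑ k, g k * (y k - x k) := by
    rw [Finset.mul_sum]
    refine Finset.sum_congr rfl (fun k _ => ?_)
    simp only [hzdef]; ring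
  rw [hsum1] at hsg
  have hcomb : (1/2 : ℝ) • x + (1/2 : ℝ) • z = y := by
    funext k; simp only [hzdef, Pi.add_apply, Pi.smul_apply, smul_eq_mul]; ring
  have hconcw := (hconc i).2 (Set.mem_setOf.2 hx) (Set.mem_setOf.2 hz0)
    (by norm_num : (0:ℝ) ≤ 1/2) (by norm_num : (0:ℝ) ≤ 1/2) (by norm_num)
  rw [hcomb] at hconcw
  have hmid : (1/2 : ℝ) * f i x + (1/2 : ℝ) * f i z ≤ f i y := by
    simpa [smul_eq_mul] using hconcw
  have hsum2 : ∑ k, M i k * (y k - x k) ≤ ∑ k, g k * (y k - x k) := by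
    refine Finset.sum_le_sum (fun k _ => ?_)
    exact mul_le_mul_of_nonneg_right (hgM k) (sub_nonneg.2 (hxk k))
  linarith

end Aux

/-- The accelerated iterates started from 0 converge faster to the fixed point than the
standard iterates started from 0, in the sup-norm sense. -/
theorem accelerated_iterates_from_zero_faster {N : ℕ} (f : Fin N → (Fin N → ℝ) → ℝ)
    (hconc : ∀ i, ConcaveOn ℝ {x : Fin N → ℝ | 0 ≤ x} (f i))
    (husc : ∀ i, UpperSemicontinuousOn (f i) {x : Fin N → ℝ | 0 ≤ x})
    (hpos : ∀ i, ∀ x : Fin N → ℝ, 0 ≤ x → 0 < f i x)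
    (M : Matrix (Fin N) (Fin N) ℝ) (hM : IsLBM f M)
    (hrad : specRad M < 1)
    (T : (Fin N → ℝ) → (Fin N → ℝ)) (hT : ∀ x : Fin N → ℝ, T x = fun i => f i x)
    (xstar : Fin N → ℝ) (hxstar : 0 ≤ xstar) (hfix : T xstar = xstar)
    (TA : (Fin N → ℝ) → (Fin N → ℝ))
    (hTA : ∀ x : Fin N → ℝ, TA x = (1 - M)⁻¹ *ᵥ (T x - M *ᵥ x)) :
    ∀ n : ℕ, ‖TA^[n] 0 - xstar‖ ≤ ‖T^[n] 0 - xstar‖ := by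
  classical
  -- basic positivity facts
  have hMnn : ∀ i k, 0 ≤ M i k := lbm_nonneg f hpos hM
  obtain ⟨S, hl, hr, hSnn⟩ := neumann M hMnn hrad
  have hinv : (1 - M)⁻¹ = S := inv_eq_right_inv hl
  have hMv : ∀ (Q : Matrix (Fin N) (Fin N) ℝ) (v : Fin N → ℝ) (i : Fin N),
      (Q *ᵥ v) i = ∑ k, Q i k * v k := fun Q v i => rfl
  have mulVec_nonneg : ∀ (Q : Matrix (Fin N) (Fin N) ℝ) (v : Fin N → ℝ),
      (∀ i k, 0 ≤ Q i k) → 0 ≤ v → 0 ≤ Q *ᵥ v := by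
    intro Q v hQ hv i
    rw [hMv]
    exact Finset.sum_nonneg fun k _ => mul_nonneg (hQ i k) (by simpa using hv k)
  have posZ : ∀ z : Fin N → ℝ, 0 ≤ (1 - M) *ᵥ z → 0 ≤ z := by
    intro z hz
    have hzeq : z = S *ᵥ ((1 - M) *ᵥ z) := by
      rw [Matrix.mulVec_mulVec, hr, Matrix.one_mulVec]
    rw [hzeq]
    exact mulVec_nonneg S _ hSnn hz
  have hTapp : ∀ (x : Fin N → ℝ) i, T x i = f i x := by
    intro x i; rw [hT x]
  have hTpos : ∀ x : Fin N → ℝ, 0 ≤ x → ∀ i, 0 < T x i := by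
    intro x hx i; rw [hTapp]; exact hpos i x hx
  have hTmono : ∀ x y : Fin N → ℝ, 0 ≤ x → x ≤ y → T x ≤ T y := by
    intro x y hx hxy i
    rw [hTapp, hTapp]
    exact mono_of_concave_pos (f i) (hconc i) (hpos i) hx hxy
  have hxpos : ∀ i, 0 < xstar i := by
    intro i
    have : T xstar i = xstar i := by rw [hfix]
    rw [← this]
    exact hTpos xstar hxstar i
  have keyvec : ∀ x y : Fin N → ℝ, 0 ≤ x → x ≤ y → (∀ k, 0 < y k) →
      T x + M *ᵥ (y - x) ≤ T y := by
    intro x y hx hxy hy i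
    have := key_ineq f hconc hpos hM hx hxy hy i
    simp only [Pi.add_apply, hTapp, hMv, Pi.sub_apply]
    exact this
  have hid : ∀ x : Fin N → ℝ, (1 - M) *ᵥ TA x = T x - M *ᵥ x := by
    intro x
    rw [hTA x, Matrix.mulVec_mulVec, hinv, hl, Matrix.one_mulVec]
  -- the invariant, by induction
  have main : ∀ n : ℕ, 0 ≤ T^[n] 0 ∧ T^[n] 0 ≤ TA^[n] 0 ∧ TA^[n] 0 ≤ T (TA^[n] 0) ∧
      TA^[n] 0 ≤ xstar ∧ T^[n] 0 ≤ xstar ∧ 0 ≤ TA^[n] 0 := by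
    intro n
    induction n with
    | zero =>
      refine ⟨le_refl _, le_refl _, ?_, ?_, ?_, le_refl _⟩
      · exact fun i => by simpa using (hTpos 0 (le_refl _) i).le
      · exact fun i => by simpa using (hxpos i).le
      · exact fun i => by simpa using (hxpos i).le
    | succ n ih =>
      obtain ⟨ha0, hab, hbT, hbx, hax, hb0⟩ := ih
      set u : Fin N → ℝ := TA^[n] 0 with hu
      set a : Fin N → ℝ := T^[n] 0 with ha
      set v : Fin N → ℝ := TA u with hv
      have hit1 : TA^[n+1] 0 = v := by rw [Function.iterate_succ_apply']
      have hit2 : T^[n+1] 0 = T a := by rw [Function.iterate_succ_apply']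
      have hidu : (1 - M) *ᵥ v = T u - M *ᵥ u := hid u
      -- v ≥ T u
      have hvTu : T u ≤ v := by
        have h1 : (1 - M) *ᵥ (v - T u) = M *ᵥ (T u - u) := by
          rw [Matrix.mulVec_sub, hidu, Matrix.sub_mulVec, Matrix.one_mulVec,
            Matrix.mulVec_sub]
          abel
        have h2 : 0 ≤ (1 - M) *ᵥ (v - T u) := by
          rw [h1]
          exact mulVec_nonneg M _ hMnn (fun i => by simpa using sub_nonneg.2 (hbT i))
        have := posZ _ h2
        intro i
        have := this i
        simpa using sub_nonneg.1 (by simpa using this)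
      have hTu_pos : ∀ i, 0 < T u i := hTpos u hb0
      have hv0 : ∀ i, 0 < v i := fun i => lt_of_lt_of_le (hTu_pos i) (hvTu i)
      have huv : u ≤ v := le_trans hbT hvTu
      -- v ≤ xstar
      have hvx : v ≤ xstar := by
        have hkey := keyvec u xstar hb0 hbx hxpos
        rw [hfix] at hkey
        have h1 : 0 ≤ (1 - M) *ᵥ (xstar - v) := by
          have heq : (1 - M) *ᵥ (xstar - v) = xstar - M *ᵥ xstar - (T u - M *ᵥ u) := by
            rw [Matrix.mulVec_sub, hidu, Matrix.sub_mulVec, Matrix.one_mulVec]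
          rw [heq]
          intro i
          have h2 := hkey i
          simp only [Pi.add_apply, Pi.sub_apply, hMv, Pi.zero_apply] at h2 ⊢
          have h3 : ∑ k, M i k * (xstar k - u k) = ∑ k, M i k * xstar k - ∑ k, M i k * u k := by
            rw [← Finset.sum_sub_distrib]
            exact Finset.sum_congr rfl fun k _ => by ring
          rw [h3] at h2
          linarith
        exact sub_nonneg.1 (by simpa using posZ _ h1)
      -- v = T u + M *ᵥ (v - u)
      have hveq : v = T u + M *ᵥ (v - u) := by
        have h1 : v - M *ᵥ v = T u - M *ᵥ u := by
          rw [← hidu, Matrix.sub_mulVec, Matrix.one_mulVec]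
        have h2 : M *ᵥ (v - u) = M *ᵥ v - M *ᵥ u := Matrix.mulVec_sub M v u
        funext i
        have h3 := congrFun h1 i
        have h4 := congrFun h2 i
        simp only [Pi.sub_apply] at h3 h4
        simp only [Pi.add_apply, h4]
        linarith
      -- v ≤ T v
      have hvTv : v ≤ T v := by
        have hkey := keyvec u v hb0 huv hv0
        rw [← hveq] at hkey
        exact hkey
      rw [hit1, hit2]
      refine ⟨fun i => (hTpos a ha0 i).le, ?_, hvTv, hvx, ?_, fun i => (hv0 i).le⟩
      · exact le_trans (hTmono a u ha0 hab) hvTu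
      · have := hTmono a xstar ha0 hax
        rwa [hfix] at this
  -- conclude
  intro n
  obtain ⟨ha0, hab, hbT, hbx, hax, hb0⟩ := main n
  rw [pi_norm_le_iff_of_nonneg (norm_nonneg _)]
  intro i
  have h1 : |TA^[n] 0 i - xstar i| = xstar i - TA^[n] 0 i := by
    rw [abs_of_nonpos (by simpa using sub_nonpos.2 (hbx i))]
    ring
  have h2 : xstar i - T^[n] 0 i ≤ |T^[n] 0 i - xstar i| := by
    rw [abs_sub_comm]
    exact le_abs_self _
  have h3 : |T^[n] 0 i - xstar i| ≤ ‖T^[n] 0 - xstar‖ := by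
    have := norm_le_pi_norm (T^[n] 0 - xstar) i
    simpa [Real.norm_eq_abs] using this
  have h4 : ‖(TA^[n] 0 - xstar) i‖ = |TA^[n] 0 i - xstar i| := by
    simp [Real.norm_eq_abs]
  rw [h4, h1]
  have h5 := hab i
  linarith
end
end

section
/- Let T : ℝ₊^N → ℝ₊₊^N be a standard interference mapping with a fixed point x* ∈ ℝ₊₊^N (T(x*) = x*). Then: (i) for every x ∈ ℝ₊^N there exists α > 1 with x ≤ α·x* componentwise; (ii) for every α > 1, T(α·x*) < α·x* strictly componentwise, so the sequence (T^n(α·x*))_{n∈ℕ} is monotonically decreasing in each component; and (iii) for every x ∈ ℝ₊^N and α > 1 with x ≤ α·x*, the sandwich T^n(0) ≤ T^n(x) ≤ T^n(α·x*) holds componentwise for every n ∈ ℕ. -/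
open Matrix Filter Topology

noncomputable section

/-- Standard interference mappings with a strictly positive fixed point: any nonnegative
point can be dominated by a multiple of the fixed point, the iterates from α·x* decrease,
and the iterates from any point are sandwiched between iterates from 0 and from α·x*. -/
theorem interference_iterates_sandwich {N : ℕ} (T : (Fin N → ℝ) → (Fin N → ℝ))
    (hposT : ∀ x : Fin N → ℝ, 0 ≤ x → ∀ i, 0 < T x i)
    (hscal : ∀ x : Fin N → ℝ, 0 ≤ x → ∀ α : ℝ, 1 < α → ∀ i, T (α • x) i < α * T x i)
    (hmono : ∀ x y : Fin N → ℝ, 0 ≤ x → 0 ≤ y → x ≤ y → T x ≤ T y)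
    (xstar : Fin N → ℝ) (hxpos : ∀ i, 0 < xstar i) (hfix : T xstar = xstar) :
    (∀ x : Fin N → ℝ, 0 ≤ x → ∃ α : ℝ, 1 < α ∧ x ≤ α • xstar) ∧
    (∀ α : ℝ, 1 < α →
      (∀ i, T (α • xstar) i < α * xstar i) ∧
      (∀ n : ℕ, T^[n + 1] (α • xstar) ≤ T^[n] (α • xstar))) ∧
    (∀ (x : Fin N → ℝ) (α : ℝ), 0 ≤ x → 1 < α → x ≤ α • xstar →
      ∀ n : ℕ, T^[n] 0 ≤ T^[n] x ∧ T^[n] x ≤ T^[n] (α • xstar)) := by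
  have hxnn : 0 ≤ xstar := fun i => (hxpos i).le
  have hnn : ∀ x : Fin N → ℝ, 0 ≤ x → ∀ n, 0 ≤ T^[n] x := by
    intro x hx n
    induction n with
    | zero => simpa using hx
    | succ n ih =>
      rw [Function.iterate_succ_apply']
      exact fun i => (hposT _ ih i).le
  have hmono' : ∀ (x y : Fin N → ℝ), 0 ≤ x → 0 ≤ y → x ≤ y →
      ∀ n, T^[n] x ≤ T^[n] y := by
    intro x y hx hy hxy n
    induction n with
    | zero => simpa using hxy
    | succ n ih =>
      rw [Function.iterate_succ_apply', Function.iterate_succ_apply']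
      exact hmono _ _ (hnn x hx n) (hnn y hy n) ih
  refine ⟨?_, ?_, ?_⟩
  · intro x hx
    refine ⟨2 + ∑ i, x i / xstar i, ?_, ?_⟩
    · have : (0:ℝ) ≤ ∑ i, x i / xstar i :=
        Finset.sum_nonneg fun i _ => div_nonneg (hx i) (hxpos i).le
      linarith
    · intro i
      have h1 : x i / xstar i ≤ ∑ j, x j / xstar j :=
        Finset.single_le_sum (f := fun j => x j / xstar j)
          (fun j _ => div_nonneg (hx j) (hxpos j).le) (Finset.mem_univ i)
      have h2 : x i = (x i / xstar i) * xstar i := by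
        rw [div_mul_cancel₀ _ (hxpos i).ne']
      have : (0:ℝ) ≤ ∑ j, x j / xstar j :=
        Finset.sum_nonneg fun j _ => div_nonneg (hx j) (hxpos j).le
      have hxi := hxpos i
      simp only [Pi.smul_apply, smul_eq_mul]
      nlinarith [hxpos i, hx i]
  · intro α hα
    have hαnn : 0 ≤ α • xstar := fun i => by
      have := hxpos i
      simp only [Pi.smul_apply, smul_eq_mul, Pi.zero_apply]
      nlinarith
    have hstep : ∀ i, T (α • xstar) i < α * xstar i := by
      intro i
      have := hscal xstar hxnn α hα i
      rwa [hfix] at this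
    refine ⟨hstep, fun n => ?_⟩
    have h1 : T (α • xstar) ≤ α • xstar := fun i => by
      simpa using (hstep i).le
    have := hmono' (T (α • xstar)) (α • xstar)
      (fun i => (hposT _ hαnn i).le) hαnn h1 n
    simpa [Function.iterate_succ_apply, Nat.add_comm] using this
  · intro x α hx hα hxα n
    have hαnn : 0 ≤ α • xstar := fun i => by
      have := hxpos i
      simp only [Pi.smul_apply, smul_eq_mul, Pi.zero_apply]
      nlinarith
    exact ⟨hmono' 0 x le_rfl hx hx n, hmono' x (α • xstar) hx hαnn hxα n⟩
end
end
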